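/- arXiv:0812.0601 — 5 statements merged into one kernel-verified Lean document; each statement's English description precedes it below -/
import Mathlib

section
/- For an n×n matrix X of indeterminates (or over any commutative ring) and any subset I of {1,...,n} with |I| = d ≥ 1, the cycle-sum C_I satisfies C_I = Σ (-1)^{k+d} (k-1)! P_{I_1}···P_{I_k}, where the sum is over all set partitions I = I_1 ⊔ ... ⊔ I_k and P_J denotes the principal minor of X indexed by J. -/
attribute [local instance] Classical.propDecidable

/-- The principal minor of `X` with rows and columns indexed by `I`. -/
noncomputable def principalMinor {n : ℕ} {R : Type*} [CommRing R]
    (X : Matrix (Fin n) (Fin n) R) (I : Finset (Fin n)) : R :=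
  (X.submatrix (fun i : {x // x ∈ I} => (i : Fin n))
    (fun j : {x // x ∈ I} => (j : Fin n))).det

/-- The cycle-sum `C_I`: sum over all cyclic permutations with support exactly `I`
of the monomial `∏_{i ∈ I} x_{i, π i}`; equals `1` for `I = ∅` and `x_{ii}` for `I = {i}`. -/
noncomputable def cycleSum {n : ℕ} {R : Type*} [CommRing R]
    (X : Matrix (Fin n) (Fin n) R) (I : Finset (Fin n)) : R :=
  if I.card ≤ 1 then ∏ i ∈ I, X i i
  else ∑ π ∈ Finset.univ.filter
      (fun π : Equiv.Perm (Fin n) => π.IsCycle ∧ π.support = I),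
    ∏ i ∈ I, X i (π i)

/-- `P` is a set partition of the finite set `I` into (nonempty, pairwise disjoint) blocks. -/
def IsSetPartition {n : ℕ} (I : Finset (Fin n)) (P : Finset (Finset (Fin n))) : Prop :=
  (∀ B ∈ P, B.Nonempty) ∧ (∀ B ∈ P, ∀ B' ∈ P, B ≠ B' → Disjoint B B') ∧ P.sup id = I


open Equiv Equiv.Perm Finset

variable {n : ℕ}

/-- if σ maps B into B then it induces a bijection of B -/
lemma maps_iff {σ : Equiv.Perm (Fin n)} {B : Finset (Fin n)}
    (h : ∀ i ∈ B, σ i ∈ B) : ∀ x, x ∈ B ↔ σ x ∈ B := by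
  have himg : B.image σ = B := by
    apply Finset.eq_of_subset_of_card_le
    · intro x hx; rcases Finset.mem_image.1 hx with ⟨y, hy, rfl⟩; exact h y hy
    · rw [Finset.card_image_of_injective _ σ.injective]
  intro x
  constructor
  · exact h x
  · intro hx
    rw [← himg] at hx
    rcases Finset.mem_image.1 hx with ⟨y, hy, hyx⟩
    rwa [← σ.injective hyx]

/-- restriction of a permutation to an invariant finset -/
noncomputable def permRestrict (σ : Equiv.Perm (Fin n)) (B : Finset (Fin n))
    (h : ∀ i ∈ B, σ i ∈ B) : Equiv.Perm (Fin n) :=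
  Equiv.Perm.ofSubtype (σ.subtypePerm (p := fun x => x ∈ B) (fun x => (maps_iff h x).symm))

lemma permRestrict_apply_of_mem {σ : Equiv.Perm (Fin n)} {B : Finset (Fin n)}
    (h : ∀ i ∈ B, σ i ∈ B) {x : Fin n} (hx : x ∈ B) : permRestrict σ B h x = σ x := by
  unfold permRestrict
  rw [Equiv.Perm.ofSubtype_apply_of_mem _ hx]; rfl

lemma permRestrict_apply_of_not_mem {σ : Equiv.Perm (Fin n)} {B : Finset (Fin n)}
    (h : ∀ i ∈ B, σ i ∈ B) {x : Fin n} (hx : x ∉ B) : permRestrict σ B h x = x :=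
  Equiv.Perm.ofSubtype_apply_of_not_mem _ hx

lemma permRestrict_support {σ : Equiv.Perm (Fin n)} {B : Finset (Fin n)}
    (h : ∀ i ∈ B, σ i ∈ B) : (permRestrict σ B h).support ⊆ B := by
  intro x hx
  by_contra hxB
  exact (Equiv.Perm.mem_support.1 hx) (permRestrict_apply_of_not_mem h hxB)

/-- support ⊆ B implies B invariant -/
lemma maps_of_support_subset {σ : Equiv.Perm (Fin n)} {B : Finset (Fin n)}
    (h : σ.support ⊆ B) : ∀ i ∈ B, σ i ∈ B := by
  intro i hi
  by_cases hs : σ i = i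
  · rwa [hs]
  · exact h (Equiv.Perm.apply_mem_support.2 (Equiv.Perm.mem_support.2 hs))

/-- Lemma C1: principal minor as a sum over permutations with support in B. -/
lemma principalMinor_eq_sum {R : Type*} [CommRing R]
    (X : Matrix (Fin n) (Fin n) R) (B : Finset (Fin n)) :
    principalMinor X B = ∑ σ ∈ Finset.univ.filter
        (fun σ : Equiv.Perm (Fin n) => σ.support ⊆ B),
      (Equiv.Perm.sign σ : R) * ∏ i ∈ B, X i (σ i) := by
  have hdet : principalMinor X B
      = ∑ σ' : Equiv.Perm {x // x ∈ B}, (Equiv.Perm.sign σ' : R) *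
          ∏ i : {x // x ∈ B}, X (i : Fin n) (σ' i : Fin n) := by
    rw [principalMinor, ← Matrix.det_transpose, Matrix.det_apply']
    rfl
  rw [hdet]
  apply Finset.sum_bij (fun (σ' : Equiv.Perm {x // x ∈ B}) _ =>
    Equiv.Perm.ofSubtype σ')
  · intro σ' _
    simp only [Finset.mem_filter, Finset.mem_univ, true_and]
    intro x hx
    by_contra hxB
    exact (Equiv.Perm.mem_support.1 hx) (Equiv.Perm.ofSubtype_apply_of_not_mem _ hxB)
  · intro a _ b _ hab
    ext x
    have h2 := congrArg (fun f : Equiv.Perm (Fin n) => f (x : Fin n)) hab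
    rw [Equiv.Perm.ofSubtype_apply_of_mem a x.2, Equiv.Perm.ofSubtype_apply_of_mem b x.2] at h2
    exact congrArg Fin.val h2
  · intro σ hσ
    simp only [Finset.mem_filter, Finset.mem_univ, true_and] at hσ
    refine ⟨σ.subtypePerm (fun x => (maps_iff (maps_of_support_subset hσ) x).symm), Finset.mem_univ _, ?_⟩
    ext x
    by_cases hx : x ∈ B
    · rw [Equiv.Perm.ofSubtype_apply_of_mem _ hx]; rfl
    · rw [Equiv.Perm.ofSubtype_apply_of_not_mem _ hx]
      by_contra hc
      exact hx (hσ (Equiv.Perm.mem_support.2 (fun h => hc (by rw [h]))))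
  · intro σ' _
    have hprod : (∏ i : {x // x ∈ B}, X (i : Fin n) (σ' i : Fin n))
        = ∏ i ∈ B, X i (Equiv.Perm.ofSubtype σ' i) := by
      rw [Finset.univ_eq_attach, ← Finset.prod_attach B (fun i => X i (Equiv.Perm.ofSubtype σ' i))]
      refine Finset.prod_congr rfl (fun i _ => ?_)
      rw [Equiv.Perm.ofSubtype_apply_of_mem σ' i.2]
    rw [Equiv.Perm.sign_ofSubtype, hprod]

/-- `P` coarsens the disjoint family `Q`, i.e. `P` is a set partition of `⋃ Q`
each of whose blocks is a union of members of `Q`. -/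
def IsCoarsening {n : ℕ} (Q P : Finset (Finset (Fin n))) : Prop :=
  IsSetPartition (Q.sup id) P ∧ ∀ B ∈ P, ∀ q ∈ Q, ¬ Disjoint q B → q ⊆ B

lemma coars_nonempty {Q P : Finset (Finset (Fin n))} (h : IsCoarsening Q P)
    (hQ : Q.Nonempty) (hQne : ∀ q ∈ Q, q.Nonempty) : P.Nonempty := by
  obtain ⟨q, hq⟩ := hQ
  obtain ⟨a, ha⟩ := hQne q hq
  have haI : a ∈ P.sup id := by
    rw [h.1.2.2]
    exact Finset.mem_sup.2 ⟨q, hq, ha⟩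
  obtain ⟨B, hB, _⟩ := Finset.mem_sup.1 haI
  exact ⟨B, hB⟩

lemma coarsening_sum (Q : Finset (Finset (Fin n)))
    (hQne : ∀ q ∈ Q, q.Nonempty)
    (hQd : ∀ q ∈ Q, ∀ q' ∈ Q, q ≠ q' → Disjoint q q')
    (hQ : Q.Nonempty) :
    ∑ P ∈ Finset.univ.filter (fun P : Finset (Finset (Fin n)) => IsCoarsening Q P),
      ((-1 : ℤ) ^ (P.card - 1) * (P.card - 1).factorial)
      = if Q.card = 1 then 1 else 0 := by
  by_cases hcard : Q.card = 1
  · -- single block: the only coarsening is `Q` itself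
    obtain ⟨q0, rfl⟩ := Finset.card_eq_one.1 hcard
    have hq0 : q0.Nonempty := hQne q0 (Finset.mem_singleton_self q0)
    have hsup : ({q0} : Finset (Finset (Fin n))).sup id = q0 := by simp
    have hset : Finset.univ.filter
        (fun P : Finset (Finset (Fin n)) => IsCoarsening {q0} P) = {{q0}} := by
      ext P
      simp only [Finset.mem_filter, Finset.mem_univ, true_and, Finset.mem_singleton]
      constructor
      · rintro ⟨⟨hne, hdisj, hsupP⟩, hco⟩
        rw [hsup] at hsupP
        have hPsub : ∀ B ∈ P, B = q0 := by
          intro B hB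
          have hBsub : B ⊆ q0 := by
            intro x hx
            rw [← hsupP]
            exact Finset.mem_sup.2 ⟨B, hB, hx⟩
          have hnd : ¬ Disjoint q0 B := by
            obtain ⟨b, hb⟩ := hne B hB
            exact fun hd => (Finset.disjoint_left.1 hd (hBsub hb)) hb
          exact Finset.Subset.antisymm hBsub
            (hco B hB q0 (by simp [hsup]) hnd)
        have hPne : P.Nonempty := by
          obtain ⟨a, ha⟩ := hq0
          have : a ∈ P.sup id := by rw [hsupP]; exact ha
          obtain ⟨B, hB, _⟩ := Finset.mem_sup.1 this
          exact ⟨B, hB⟩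
        apply Finset.eq_singleton_iff_nonempty_unique_mem.2 ⟨hPne, hPsub⟩
      · rintro rfl
        refine ⟨⟨fun B hB => ?_, fun B hB B' hB' hne => ?_, ?_⟩, ?_⟩
        · rw [Finset.mem_singleton] at hB; rw [hB]; exact hq0
        · rw [Finset.mem_singleton] at hB hB'; rw [hB, hB'] at hne; exact absurd rfl hne
        · simp [hsup]
        · intro B hB q hq hnd
          rw [Finset.mem_singleton] at hB hq
          rw [hB, hq]
      
    rw [hset, if_pos hcard]
    simp
  · -- at least two blocks: termwise cancellation
    rw [if_neg hcard]
    obtain ⟨q0, hq0Q⟩ := hQ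
    have hq0 : q0.Nonempty := hQne q0 hq0Q
    set Q' : Finset (Finset (Fin n)) := Q.erase q0 with hQ'def
    have hQ'card : Q'.Nonempty := by
      have h0 : 0 < Q.card := Finset.card_pos.2 ⟨q0, hq0Q⟩
      rw [hQ'def, ← Finset.card_pos, Finset.card_erase_of_mem hq0Q]
      omega
    have hQins : Q = insert q0 Q' := (Finset.insert_erase hq0Q).symm
    -- q0 is disjoint from every member of Q' and from sup Q'
    have hdisjQ' : ∀ q ∈ Q', Disjoint q0 q := by
      intro q hq
      exact hQd q0 hq0Q q (Finset.mem_of_mem_erase hq) (Ne.symm (Finset.ne_of_mem_erase hq))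
    have hdisjsup : Disjoint q0 (Q'.sup id) := by
      rw [Finset.disjoint_left]
      intro a ha hc
      obtain ⟨q, hq, haq⟩ := Finset.mem_sup.1 hc
      exact Finset.disjoint_left.1 (hdisjQ' q hq) ha haq
    have hsupQ : Q.sup id = q0 ∪ Q'.sup id := by
      rw [hQins, Finset.sup_insert]; rfl
    -- blocks of a coarsening of Q' are inside sup Q'
    have hblock' : ∀ P', IsCoarsening Q' P' → ∀ B ∈ P', B ⊆ Q'.sup id := by
      intro P' hP' B hB x hx
      rw [← hP'.1.2.2]
      exact Finset.mem_sup.2 ⟨B, hB, hx⟩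
    have hq0nsub : ∀ s : Finset (Fin n), s ⊆ Q'.sup id → ¬ q0 ⊆ s := by
      intro s hs hq0s
      obtain ⟨a, ha⟩ := hq0
      exact Finset.disjoint_left.1 hdisjsup ha (hs (hq0s ha))
    have hdisj_q0_block : ∀ P', IsCoarsening Q' P' → ∀ B ∈ P', Disjoint q0 B := by
      intro P' hP' B hB
      exact Finset.disjoint_left.2 fun a ha hc =>
        Finset.disjoint_left.1 hdisjsup ha (hblock' P' hP' B hB hc)
    have hq0notin : ∀ P', IsCoarsening Q' P' → q0 ∉ P' := by
      intro P' hP' hc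
      exact hq0nsub q0 (hblock' P' hP' q0 hc) Finset.Subset.rfl
    have h_ins : ∀ P', IsCoarsening Q' P' → IsCoarsening Q (insert q0 P') := by
      intro P' hP'
      obtain ⟨⟨hne, hdisj, hsup⟩, hco⟩ := id hP'
      refine ⟨⟨?_, ?_, ?_⟩, ?_⟩
      · intro B hB
        rcases Finset.mem_insert.1 hB with rfl | hB
        · exact hq0
        · exact hne B hB
      · intro B hB B' hB' hBne
        rcases Finset.mem_insert.1 hB with hB0 | hBP
        · rcases Finset.mem_insert.1 hB' with hB0' | hBP'
          · exact absurd (hB0.trans hB0'.symm) hBne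
          · rw [hB0]; exact hdisj_q0_block P' hP' B' hBP'
        · rcases Finset.mem_insert.1 hB' with hB0' | hBP'
          · rw [hB0']; exact (hdisj_q0_block P' hP' B hBP).symm
          · exact hdisj B hBP B' hBP' hBne
      · rw [Finset.sup_insert, hsupQ, hsup]; rfl
      · intro B hB q hq hnd
        rcases Finset.mem_insert.1 hB with hB0 | hBP
        · by_cases hqq : q = q0
          · rw [hqq, hB0]
          · rw [hB0] at hnd
            exact absurd (hdisjQ' q (Finset.mem_erase.2 ⟨hqq, hq⟩)).symm hnd
        · by_cases hqq : q = q0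
          · rw [hqq] at hnd
            exact absurd (hdisj_q0_block P' hP' B hBP) hnd
          · exact hco B hBP q (Finset.mem_erase.2 ⟨hqq, hq⟩) hnd
    rw [← Finset.sum_filter_add_sum_filter_not
      (Finset.univ.filter (fun P : Finset (Finset (Fin n)) => IsCoarsening Q P))
      (fun P => q0 ∈ P)]
    have claimA :
        ∑ P ∈ (Finset.univ.filter
            (fun P : Finset (Finset (Fin n)) => IsCoarsening Q P)).filter
            (fun P => q0 ∈ P),
          ((-1 : ℤ) ^ (P.card - 1) * (P.card - 1).factorial)
        = ∑ P' ∈ Finset.univ.filter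
            (fun P' : Finset (Finset (Fin n)) => IsCoarsening Q' P'),
          ((-1 : ℤ) ^ P'.card * P'.card.factorial) := by
      refine (Finset.sum_bij (fun P' _ => insert q0 P') ?_ ?_ ?_ ?_).symm
      · intro P' hP'
        simp only [Finset.mem_filter, Finset.mem_univ, true_and] at hP' ⊢
        exact ⟨h_ins P' hP', Finset.mem_insert_self _ _⟩
      · intro P1 h1 P2 h2 heq
        rw [Finset.mem_filter] at h1 h2
        have e1 : P1 = (insert q0 P1).erase q0 :=
          (Finset.erase_insert (hq0notin P1 h1.2)).symm
        rw [e1, heq, Finset.erase_insert (hq0notin P2 h2.2)]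
      · intro P hP
        rw [Finset.mem_filter, Finset.mem_filter] at hP
        obtain ⟨⟨_, hPco⟩, hq0P⟩ := hP
        obtain ⟨⟨hne, hdisj, hsup⟩, hco⟩ := id hPco
        have hob : ∀ B ∈ P.erase q0, Disjoint q0 B := by
          intro B hB
          exact hdisj q0 hq0P B (Finset.mem_of_mem_erase hB)
            (Ne.symm (Finset.ne_of_mem_erase hB))
        refine ⟨P.erase q0, Finset.mem_filter.2 ⟨Finset.mem_univ _,
          ⟨⟨fun B hB => hne B (Finset.mem_of_mem_erase hB),
            fun B hB B' hB' h => hdisj B (Finset.mem_of_mem_erase hB) B'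
              (Finset.mem_of_mem_erase hB') h, ?_⟩, ?_⟩⟩,
          (Finset.insert_erase hq0P)⟩
        · apply Finset.Subset.antisymm
          · intro x hx
            obtain ⟨B, hB, hxB⟩ := Finset.mem_sup.1 hx
            have hxQ : x ∈ Q.sup id := by
              rw [← hsup]
              exact Finset.mem_sup.2 ⟨B, Finset.mem_of_mem_erase hB, hxB⟩
            rw [hsupQ] at hxQ
            rcases Finset.mem_union.1 hxQ with hx0 | hx'
            · exact absurd hxB (Finset.disjoint_left.1 (hob B hB) hx0)
            · exact hx'
          · intro x hx
            have hxP : x ∈ P.sup id := by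
              rw [hsup, hsupQ]
              exact Finset.mem_union_right _ hx
            obtain ⟨B, hB, hxB⟩ := Finset.mem_sup.1 hxP
            have hBq0 : B ≠ q0 := by
              rintro rfl
              exact Finset.disjoint_left.1 hdisjsup hxB hx
            exact Finset.mem_sup.2 ⟨B, Finset.mem_erase.2 ⟨hBq0, hB⟩, hxB⟩
        · intro B hB q hq hnd
          exact hco B (Finset.mem_of_mem_erase hB) q (Finset.mem_of_mem_erase hq) hnd
      · intro P' hP'
        rw [Finset.mem_filter] at hP'
        rw [Finset.card_insert_of_notMem (hq0notin P' hP'.2)]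
        simp
    have hstep : ∀ P', IsCoarsening Q' P' → ∀ B ∈ P',
        IsCoarsening Q (insert (B ∪ q0) (P'.erase B)) ∧
        q0 ∉ insert (B ∪ q0) (P'.erase B) ∧ (B ∪ q0) ∉ P'.erase B := by
      intro P' hP' B hBP'
      obtain ⟨⟨hne, hdisj, hsup⟩, hco⟩ := id hP'
      have hBsub : B ⊆ Q'.sup id := hblock' P' hP' B hBP'
      have hiii : (B ∪ q0) ∉ P'.erase B := by
        intro hc
        exact hq0nsub (B ∪ q0) (hblock' P' hP' _ (Finset.mem_of_mem_erase hc))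
          Finset.subset_union_right
      have hii : q0 ∉ insert (B ∪ q0) (P'.erase B) := by
        intro hc
        rcases Finset.mem_insert.1 hc with h | h
        · obtain ⟨b, hb⟩ := hne B hBP'
          have : b ∈ q0 := by rw [h]; exact Finset.mem_union_left _ hb
          exact Finset.disjoint_left.1 hdisjsup this (hBsub hb)
        · exact hq0nsub q0 (hblock' P' hP' q0 (Finset.mem_of_mem_erase h))
            Finset.Subset.rfl
      have hsup1 : P'.sup id = B ⊔ (P'.erase B).sup id := by
        conv_lhs => rw [← Finset.insert_erase hBP']
        rw [Finset.sup_insert]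
        rfl
      refine ⟨⟨⟨?_, ?_, ?_⟩, ?_⟩, hii, hiii⟩
      · intro C hC
        rcases Finset.mem_insert.1 hC with hC0 | hC
        · rw [hC0]; exact hq0.mono Finset.subset_union_right
        · exact hne C (Finset.mem_of_mem_erase hC)
      · intro C hC C' hC' hCne
        have hdq : ∀ D ∈ P'.erase B, Disjoint (B ∪ q0) D := by
          intro D hD
          refine Finset.disjoint_union_left.2 ⟨?_, ?_⟩
          · exact hdisj B hBP' D (Finset.mem_of_mem_erase hD)
              (Ne.symm (Finset.ne_of_mem_erase hD))
          · exact hdisj_q0_block P' hP' D (Finset.mem_of_mem_erase hD)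
        rcases Finset.mem_insert.1 hC with hC0 | hC
        · rcases Finset.mem_insert.1 hC' with hC0' | hC'
          · exact absurd (hC0.trans hC0'.symm) hCne
          · rw [hC0]; exact hdq C' hC'
        · rcases Finset.mem_insert.1 hC' with hC0' | hC'
          · rw [hC0']; exact (hdq C hC).symm
          · exact hdisj C (Finset.mem_of_mem_erase hC) C' (Finset.mem_of_mem_erase hC') hCne
      · rw [Finset.sup_insert, hsupQ, ← hsup, hsup1]
        change (B ∪ q0) ∪ _ = q0 ∪ (B ∪ _)
        rw [Finset.union_comm B q0, Finset.union_assoc]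
      · intro C hC q hq hnd
        rcases Finset.mem_insert.1 hC with hC0 | hC
        · rw [hC0] at hnd ⊢
          by_cases hqq : q = q0
          · rw [hqq]; exact Finset.subset_union_right
          · have hqQ' : q ∈ Q' := Finset.mem_erase.2 ⟨hqq, hq⟩
            have hqB : ¬ Disjoint q B := by
              intro hd
              exact hnd (Finset.disjoint_union_right.2 ⟨hd, (hdisjQ' q hqQ').symm⟩)
            exact (hco B hBP' q hqQ' hqB).trans Finset.subset_union_left
        · by_cases hqq : q = q0
          · rw [hqq] at hnd
            exact absurd (hdisj_q0_block P' hP' C (Finset.mem_of_mem_erase hC)) hnd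
          · exact hco C (Finset.mem_of_mem_erase hC) q (Finset.mem_erase.2 ⟨hqq, hq⟩) hnd
    have hstepcard : ∀ P', IsCoarsening Q' P' → ∀ B ∈ P',
        (insert (B ∪ q0) (P'.erase B)).card = P'.card := by
      intro P' hP' B hBP'
      have h1 : 1 ≤ P'.card := Finset.card_pos.2 ⟨B, hBP'⟩
      rw [Finset.card_insert_of_notMem (hstep P' hP' B hBP').2.2,
        Finset.card_erase_of_mem hBP']
      omega
    have claimB :
        ∑ P ∈ (Finset.univ.filter
            (fun P : Finset (Finset (Fin n)) => IsCoarsening Q P)).filter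
            (fun P => ¬ q0 ∈ P),
          ((-1 : ℤ) ^ (P.card - 1) * (P.card - 1).factorial)
        = ∑ P' ∈ Finset.univ.filter
            (fun P' : Finset (Finset (Fin n)) => IsCoarsening Q' P'),
          (P'.card : ℤ) * ((-1 : ℤ) ^ (P'.card - 1) * (P'.card - 1).factorial) := by
      have key : ∑ P ∈ (Finset.univ.filter
            (fun P : Finset (Finset (Fin n)) => IsCoarsening Q P)).filter
            (fun P => ¬ q0 ∈ P),
          ((-1 : ℤ) ^ (P.card - 1) * (P.card - 1).factorial)
        = ∑ x ∈ (Finset.univ.filter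
            (fun P' : Finset (Finset (Fin n)) => IsCoarsening Q' P')).sigma
            (fun P' => P'),
          ((-1 : ℤ) ^ (x.1.card - 1) * (x.1.card - 1).factorial) := by
        refine (Finset.sum_bij
          (fun (x : Σ _P : Finset (Finset (Fin n)), Finset (Fin n)) _ =>
            insert (x.2 ∪ q0) (x.1.erase x.2)) ?_ ?_ ?_ ?_).symm
        · rintro ⟨P', B⟩ hx
          rw [Finset.mem_sigma, Finset.mem_filter] at hx
          obtain ⟨⟨_, hP'⟩, hB⟩ := hx
          rw [Finset.mem_filter, Finset.mem_filter]
          exact ⟨⟨Finset.mem_univ _, (hstep P' hP' B hB).1⟩, (hstep P' hP' B hB).2.1⟩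
        · rintro ⟨P1, B1⟩ h1 ⟨P2, B2⟩ h2 heq
          rw [Finset.mem_sigma, Finset.mem_filter] at h1 h2
          obtain ⟨⟨_, hP1⟩, hB1⟩ := h1
          obtain ⟨⟨_, hP2⟩, hB2⟩ := h2
          simp only at heq
          have hm1 : B1 ∪ q0 ∈ insert (B2 ∪ q0) (P2.erase B2) := by
            rw [← heq]; exact Finset.mem_insert_self _ _
          rcases Finset.mem_insert.1 hm1 with h | h
          · have hBB : B1 = B2 := by
              have e1 : B1 = (B1 ∪ q0) \ q0 :=
                (Finset.union_sdiff_cancel_right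
                  ((hdisj_q0_block P1 hP1 B1 hB1).symm)).symm
              rw [e1, h, Finset.union_sdiff_cancel_right
                ((hdisj_q0_block P2 hP2 B2 hB2).symm)]
            have hPP : P1 = P2 := by
              have he : P1.erase B1 = P2.erase B2 := by
                have e2 : P1.erase B1 =
                    (insert (B1 ∪ q0) (P1.erase B1)).erase (B1 ∪ q0) :=
                  (Finset.erase_insert (hstep P1 hP1 B1 hB1).2.2).symm
                rw [e2, heq, h, Finset.erase_insert (hstep P2 hP2 B2 hB2).2.2]
              calc P1 = insert B1 (P1.erase B1) := (Finset.insert_erase hB1).symm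
                _ = insert B2 (P2.erase B2) := by rw [he, hBB]
                _ = P2 := Finset.insert_erase hB2
            subst hPP
            simp [hBB]
          · exact absurd (hq0nsub (B1 ∪ q0)
              (hblock' P2 hP2 _ (Finset.mem_of_mem_erase h)) Finset.subset_union_right)
              (fun _ => by
                exact absurd h (fun hc => hq0nsub (B1 ∪ q0)
                  (hblock' P2 hP2 _ (Finset.mem_of_mem_erase hc))
                  Finset.subset_union_right))
        · intro P hP
          rw [Finset.mem_filter, Finset.mem_filter] at hP
          obtain ⟨⟨_, hPco⟩, hq0P⟩ := hP
          obtain ⟨⟨hne, hdisj, hsup⟩, hco⟩ := id hPco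
          obtain ⟨a, haq0⟩ := hq0
          have haP : a ∈ P.sup id := by
            rw [hsup]
            exact Finset.mem_sup.2 ⟨q0, hq0Q, haq0⟩
          obtain ⟨B0, hB0P, haB0⟩ := Finset.mem_sup.1 haP
          have hq0B0 : q0 ⊆ B0 := by
            apply hco B0 hB0P q0 hq0Q
            exact fun hd => Finset.disjoint_left.1 hd haq0 haB0
          have hB0ne : B0 ≠ q0 := fun h => hq0P (h ▸ hB0P)
          have hob : ∀ C ∈ P.erase B0, Disjoint q0 C := by
            intro C hC
            by_contra hnd
            have hsub := hco C (Finset.mem_of_mem_erase hC) q0 hq0Q hnd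
            exact Finset.disjoint_left.1
              (hdisj C (Finset.mem_of_mem_erase hC) B0 hB0P (Finset.ne_of_mem_erase hC))
              (hsub haq0) (hq0B0 haq0)
          set B : Finset (Fin n) := B0 \ q0 with hBdef
          have hBne : B.Nonempty := by
            rw [Finset.nonempty_iff_ne_empty]
            intro hc
            have : B0 ⊆ q0 := by
              rw [← Finset.sdiff_eq_empty_iff_subset] at *
              exact hc
            exact hB0ne (Finset.Subset.antisymm this hq0B0)
          have hBnotinP : B ∉ P := by
            intro hc
            have hBneB0 : B ≠ B0 := by
              intro h
              have : a ∈ B := h ▸ haB0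
              rw [hBdef] at this
              exact (Finset.mem_sdiff.1 this).2 haq0
            obtain ⟨b, hb⟩ := hBne
            exact Finset.disjoint_left.1 (hdisj B hc B0 hB0P hBneB0) hb
              (Finset.mem_sdiff.1 hb).1
          set P' : Finset (Finset (Fin n)) := insert B (P.erase B0) with hP'def
          have hBnotinerase : B ∉ P.erase B0 := fun hc => hBnotinP (Finset.mem_of_mem_erase hc)
          have hP'coars : IsCoarsening Q' P' := by
            refine ⟨⟨?_, ?_, ?_⟩, ?_⟩
            · intro C hC
              rcases Finset.mem_insert.1 hC with rfl | hC
              · exact hBne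
              · exact hne C (Finset.mem_of_mem_erase hC)
            · intro C hC C' hC' hCne
              rcases Finset.mem_insert.1 hC with rfl | hC <;>
                rcases Finset.mem_insert.1 hC' with rfl | hC'
              · exact absurd rfl hCne
              · exact Finset.disjoint_left.2 fun x hx hx' =>
                  Finset.disjoint_left.1
                    (hdisj B0 hB0P C' (Finset.mem_of_mem_erase hC')
                      (Ne.symm (Finset.ne_of_mem_erase hC')))
                    (Finset.mem_sdiff.1 hx).1 hx'
              · exact (Finset.disjoint_left.2 fun x hx hx' =>
                  Finset.disjoint_left.1
                    (hdisj B0 hB0P C (Finset.mem_of_mem_erase hC)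
                      (Ne.symm (Finset.ne_of_mem_erase hC)))
                    (Finset.mem_sdiff.1 hx).1 hx').symm
              · exact hdisj C (Finset.mem_of_mem_erase hC) C'
                  (Finset.mem_of_mem_erase hC') hCne
            · apply Finset.Subset.antisymm
              · intro x hx
                obtain ⟨C, hC, hxC⟩ := Finset.mem_sup.1 hx
                rcases Finset.mem_insert.1 hC with rfl | hC
                · have hx0 : x ∉ q0 := (Finset.mem_sdiff.1 hxC).2
                  have : x ∈ Q.sup id := by
                    rw [← hsup]
                    exact Finset.mem_sup.2 ⟨B0, hB0P, (Finset.mem_sdiff.1 hxC).1⟩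
                  rw [hsupQ] at this
                  rcases Finset.mem_union.1 this with h | h
                  · exact absurd h hx0
                  · exact h
                · have hx0 : x ∉ q0 := fun hc =>
                    Finset.disjoint_left.1 (hob C hC) hc hxC
                  have : x ∈ Q.sup id := by
                    rw [← hsup]
                    exact Finset.mem_sup.2 ⟨C, Finset.mem_of_mem_erase hC, hxC⟩
                  rw [hsupQ] at this
                  rcases Finset.mem_union.1 this with h | h
                  · exact absurd h hx0
                  · exact h
              · intro x hx
                have hx0 : x ∉ q0 := fun hc => Finset.disjoint_left.1 hdisjsup hc hx
                have hxP : x ∈ P.sup id := by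
                  rw [hsup, hsupQ]
                  exact Finset.mem_union_right _ hx
                obtain ⟨C, hC, hxC⟩ := Finset.mem_sup.1 hxP
                by_cases hCB0 : C = B0
                · subst hCB0
                  exact Finset.mem_sup.2 ⟨B, Finset.mem_insert_self _ _,
                    Finset.mem_sdiff.2 ⟨hxC, hx0⟩⟩
                · exact Finset.mem_sup.2 ⟨C,
                    Finset.mem_insert_of_mem (Finset.mem_erase.2 ⟨hCB0, hC⟩), hxC⟩
            · intro C hC q hq hnd
              rcases Finset.mem_insert.1 hC with rfl | hC
              · have hqB0 : ¬ Disjoint q B0 := by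
                  intro hd
                  exact hnd (Finset.disjoint_left.2 fun x hx hx' =>
                    Finset.disjoint_left.1 hd hx (Finset.mem_sdiff.1 hx').1)
                have hsub : q ⊆ B0 := hco B0 hB0P q (Finset.mem_of_mem_erase hq) hqB0
                intro x hx
                exact Finset.mem_sdiff.2 ⟨hsub hx,
                  fun hc => Finset.disjoint_left.1 (hdisjQ' q hq).symm hx hc⟩
              · exact hco C (Finset.mem_of_mem_erase hC) q (Finset.mem_of_mem_erase hq) hnd
          refine ⟨⟨P', B⟩, ?_, ?_⟩
          · rw [Finset.mem_sigma, Finset.mem_filter]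
            exact ⟨⟨Finset.mem_univ _, hP'coars⟩, Finset.mem_insert_self _ _⟩
          · simp only
            have e1 : B ∪ q0 = B0 := Finset.sdiff_union_of_subset hq0B0
            have e2 : P'.erase B = P.erase B0 := by
              rw [hP'def, Finset.erase_insert hBnotinerase]
            rw [e1, e2, Finset.insert_erase hB0P]
        · rintro ⟨P', B⟩ hx
          rw [Finset.mem_sigma, Finset.mem_filter] at hx
          obtain ⟨⟨_, hP'⟩, hB⟩ := hx
          simp only
          rw [hstepcard P' hP' B hB]
      rw [key, Finset.sum_sigma]
      apply Finset.sum_congr rfl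
      intro P' _
      simp only [Finset.sum_const, nsmul_eq_mul]
    rw [claimA, claimB, ← Finset.sum_add_distrib]
    apply Finset.sum_eq_zero
    intro P' hP'
    rw [Finset.mem_filter] at hP'
    have hc : 1 ≤ P'.card := Finset.card_pos.2
      (coars_nonempty hP'.2 hQ'card (fun q hq => hQne q (Finset.mem_of_mem_erase hq)))
    obtain ⟨k, hk⟩ : ∃ k, P'.card = k + 1 := ⟨P'.card - 1, by omega⟩
    rw [hk]
    have hfac : ((k + 1).factorial : ℤ) = (k + 1) * k.factorial := by
      rw [Nat.factorial_succ]; push_cast; ring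
    simp only [Nat.add_sub_cancel]
    rw [hfac, pow_succ]
    push_cast
    ring


/-- The orbit of `i` under `σ`, as a finset (a singleton if `i` is fixed). -/
noncomputable def orbitOf (σ : Equiv.Perm (Fin n)) (i : Fin n) : Finset (Fin n) :=
  insert i (σ.cycleOf i).support

lemma mem_orbitOf {σ : Equiv.Perm (Fin n)} {i j : Fin n} :
    j ∈ orbitOf σ i ↔ σ.SameCycle i j := by
  unfold orbitOf
  rw [Finset.mem_insert, Equiv.Perm.mem_support_cycleOf_iff]
  constructor
  · rintro (rfl | ⟨h, _⟩)
    · exact Equiv.Perm.SameCycle.refl σ _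
    · exact h
  · intro h
    by_cases hi : i ∈ σ.support
    · exact Or.inr ⟨h, hi⟩
    · left
      obtain ⟨k, hk⟩ := h
      rw [← hk, Equiv.Perm.zpow_apply_eq_self_of_apply_eq_self
        (Equiv.Perm.notMem_support.1 hi)]

lemma self_mem_orbitOf {σ : Equiv.Perm (Fin n)} {i : Fin n} : i ∈ orbitOf σ i :=
  mem_orbitOf.2 (Equiv.Perm.SameCycle.refl σ i)

lemma orbitOf_nonempty {σ : Equiv.Perm (Fin n)} {i : Fin n} : (orbitOf σ i).Nonempty :=
  ⟨i, self_mem_orbitOf⟩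

lemma orbitOf_eq_of_mem {σ : Equiv.Perm (Fin n)} {i j : Fin n}
    (h : j ∈ orbitOf σ i) : orbitOf σ j = orbitOf σ i := by
  have hij : σ.SameCycle i j := mem_orbitOf.1 h
  ext x
  rw [mem_orbitOf, mem_orbitOf]
  exact ⟨fun hx => hij.trans hx, fun hx => hij.symm.trans hx⟩

lemma apply_mem_orbitOf {σ : Equiv.Perm (Fin n)} {i : Fin n} : σ i ∈ orbitOf σ i :=
  mem_orbitOf.2 ⟨1, by simp⟩

lemma orbitOf_subset {σ : Equiv.Perm (Fin n)} {I : Finset (Fin n)}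
    (hsupp : σ.support ⊆ I) {i : Fin n} (hi : i ∈ I) : orbitOf σ i ⊆ I := by
  intro j hj
  rcases Finset.mem_insert.1 hj with rfl | hj
  · exact hi
  · exact hsupp (Equiv.Perm.support_cycleOf_le σ i hj)

lemma zpow_mem_of_invariant {σ : Equiv.Perm (Fin n)} {B : Finset (Fin n)}
    (hinv : ∀ i ∈ B, σ i ∈ B) : ∀ (k : ℤ), ∀ y ∈ B, (σ ^ k) y ∈ B := by
  intro k
  induction k using Int.induction_on with
  | zero => intro y hy; simpa using hy
  | succ k ih =>
    intro y hy
    have : σ ^ ((k : ℤ) + 1) = σ ^ (k : ℤ) * σ := zpow_add_one σ k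
    rw [this, Equiv.Perm.mul_apply]
    exact ih (σ y) (hinv y hy)
  | pred k ih =>
    intro y hy
    have : σ ^ (-(k : ℤ) - 1) = σ ^ (-(k : ℤ)) * σ⁻¹ := zpow_sub_one σ (-(k : ℤ))
    rw [this, Equiv.Perm.mul_apply]
    apply ih
    have := (maps_iff hinv (σ⁻¹ y))
    rw [show σ (σ⁻¹ y) = y from σ.apply_symm_apply y] at this
    exact this.2 hy

lemma orbit_subset_of_invariant {σ : Equiv.Perm (Fin n)} {B : Finset (Fin n)}
    (hinv : ∀ i ∈ B, σ i ∈ B) {j : Fin n} (hj : j ∈ B) :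
    orbitOf σ j ⊆ B := by
  intro x hx
  obtain ⟨k, hk⟩ := mem_orbitOf.1 hx
  rw [← hk]
  exact zpow_mem_of_invariant hinv k j hj

lemma orbit_sup_eq {σ : Equiv.Perm (Fin n)} {I : Finset (Fin n)}
    (hsupp : σ.support ⊆ I) : (I.image (orbitOf σ)).sup id = I := by
  apply Finset.Subset.antisymm
  · intro x hx
    obtain ⟨q, hq, hxq⟩ := Finset.mem_sup.1 hx
    obtain ⟨i, hi, rfl⟩ := Finset.mem_image.1 hq
    exact orbitOf_subset hsupp hi hxq
  · intro i hi
    exact Finset.mem_sup.2 ⟨orbitOf σ i, Finset.mem_image_of_mem _ hi, self_mem_orbitOf⟩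

lemma orbit_image_nonempty_blocks {σ : Equiv.Perm (Fin n)} {I : Finset (Fin n)} :
    ∀ q ∈ I.image (orbitOf σ), q.Nonempty := by
  intro q hq
  obtain ⟨i, _, rfl⟩ := Finset.mem_image.1 hq
  exact orbitOf_nonempty

lemma orbit_image_disjoint {σ : Equiv.Perm (Fin n)} {I : Finset (Fin n)} :
    ∀ q ∈ I.image (orbitOf σ), ∀ q' ∈ I.image (orbitOf σ), q ≠ q' → Disjoint q q' := by
  intro q hq q' hq' hne
  obtain ⟨i, _, rfl⟩ := Finset.mem_image.1 hq
  obtain ⟨i', _, rfl⟩ := Finset.mem_image.1 hq'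
  rw [Finset.disjoint_left]
  intro j hj hj'
  exact hne ((orbitOf_eq_of_mem hj).symm.trans (orbitOf_eq_of_mem hj'))

lemma invariant_iff_coarsening {σ : Equiv.Perm (Fin n)} {I : Finset (Fin n)}
    (hsupp : σ.support ⊆ I) {P : Finset (Finset (Fin n))} (hP : IsSetPartition I P) :
    (∀ B ∈ P, ∀ i ∈ B, σ i ∈ B) ↔ IsCoarsening (I.image (orbitOf σ)) P := by
  constructor
  · intro hinv
    refine ⟨by rwa [orbit_sup_eq hsupp], ?_⟩
    intro B hB q hq hnd
    obtain ⟨i, _, rfl⟩ := Finset.mem_image.1 hq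
    obtain ⟨j, hjq, hjB⟩ := Finset.not_disjoint_iff.1 hnd
    rw [← orbitOf_eq_of_mem hjq]
    exact orbit_subset_of_invariant (hinv B hB) hjB
  · intro hco B hB i hi
    have hiI : i ∈ I := by
      rw [← hP.2.2]
      exact Finset.mem_sup.2 ⟨B, hB, hi⟩
    have hq : orbitOf σ i ∈ I.image (orbitOf σ) := Finset.mem_image_of_mem _ hiI
    have hnd : ¬ Disjoint (orbitOf σ i) B :=
      Finset.not_disjoint_iff.2 ⟨i, self_mem_orbitOf, hi⟩
    exact hco.2 B hB _ hq hnd (apply_mem_orbitOf)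

lemma orbit_card_one_iff {σ : Equiv.Perm (Fin n)} {I : Finset (Fin n)}
    (hsupp : σ.support ⊆ I) (hI2 : 2 ≤ I.card) :
    (I.image (orbitOf σ)).card = 1 ↔ (σ.IsCycle ∧ σ.support = I) := by
  have hInonempty : I.Nonempty := Finset.card_pos.1 (by omega)
  constructor
  · intro hcard
    obtain ⟨q, hq⟩ := Finset.card_eq_one.1 hcard
    have horb : ∀ i ∈ I, orbitOf σ i = q := by
      intro i hi
      have : orbitOf σ i ∈ I.image (orbitOf σ) := Finset.mem_image_of_mem _ hi
      rw [hq, Finset.mem_singleton] at this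
      exact this
    have hqI : q = I := by
      have := orbit_sup_eq hsupp (σ := σ) (I := I)
      rw [hq] at this
      simpa using this
    have hmem_supp : ∀ i ∈ I, i ∈ σ.support := by
      intro i hi
      by_contra hns
      have h1 : σ.cycleOf i = 1 := (Equiv.Perm.cycleOf_eq_one_iff σ).2
        (Equiv.Perm.notMem_support.1 hns)
      have : orbitOf σ i = {i} := by
        unfold orbitOf
        rw [h1]
        simp
      rw [horb i hi, hqI] at this
      rw [this] at hI2
      simp at hI2
    have hsuppeq : σ.support = I :=
      Finset.Subset.antisymm hsupp (fun i hi => hmem_supp i hi)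
    obtain ⟨i0, hi0⟩ := hInonempty
    refine ⟨⟨i0, Equiv.Perm.mem_support.1 (hmem_supp i0 hi0), ?_⟩, hsuppeq⟩
    intro y hy
    have hyI : y ∈ I := hsupp (Equiv.Perm.mem_support.2 hy)
    have : y ∈ orbitOf σ i0 := by
      rw [horb i0 hi0, hqI]
      exact hyI
    exact mem_orbitOf.1 this
  · rintro ⟨hcyc, hsuppeq⟩
    have horb : ∀ i ∈ I, orbitOf σ i = I := by
      intro i hi
      have hisupp : i ∈ σ.support := hsuppeq ▸ hi
      have hcoi : σ.cycleOf i = σ := hcyc.cycleOf_eq (Equiv.Perm.mem_support.1 hisupp)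
      unfold orbitOf
      rw [hcoi, hsuppeq, Finset.insert_eq_self.2 hi]
    have : I.image (orbitOf σ) = {I} := by
      apply Finset.eq_singleton_iff_nonempty_unique_mem.2
      refine ⟨Finset.image_nonempty.2 hInonempty, ?_⟩
      intro q hq
      obtain ⟨i, hi, rfl⟩ := Finset.mem_image.1 hq
      exact horb i hi
    rw [this]
    exact Finset.card_singleton I

lemma prod_principalMinor_eq_sum {R : Type*} [CommRing R]
    (X : Matrix (Fin n) (Fin n) R) (P : Finset (Finset (Fin n)))
    (hd : ∀ B ∈ P, ∀ B' ∈ P, B ≠ B' → Disjoint B B') :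
    ∏ B ∈ P, principalMinor X B
      = ∑ σ ∈ Finset.univ.filter (fun σ : Equiv.Perm (Fin n) =>
          σ.support ⊆ P.sup id ∧ ∀ B ∈ P, ∀ i ∈ B, σ i ∈ B),
        (Equiv.Perm.sign σ : R) * ∏ i ∈ P.sup id, X i (σ i) := by
  induction P using Finset.induction_on with
  | empty =>
    have hfil : Finset.univ.filter (fun σ : Equiv.Perm (Fin n) =>
        σ.support ⊆ (∅ : Finset (Finset (Fin n))).sup id ∧
        ∀ B ∈ (∅ : Finset (Finset (Fin n))), ∀ i ∈ B, σ i ∈ B) = {1} := by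
      ext σ
      simp only [Finset.mem_filter, Finset.mem_univ, true_and, Finset.sup_empty,
        Finset.mem_singleton, Finset.notMem_empty]
      constructor
      · rintro ⟨hs, _⟩
        rw [← Equiv.Perm.support_eq_empty_iff]
        exact Finset.subset_empty.1 hs
      · rintro rfl
        simp
    rw [hfil]
    simp
  | @insert B₀ P' hB0notin ih =>
    have hd' : ∀ B ∈ P', ∀ B' ∈ P', B ≠ B' → Disjoint B B' := by
      intro B hB B' hB' hne
      exact hd B (Finset.mem_insert_of_mem hB) B' (Finset.mem_insert_of_mem hB') hne
    have hdB0 : ∀ B ∈ P', Disjoint B₀ B := by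
      intro B hB
      exact hd B₀ (Finset.mem_insert_self _ _) B (Finset.mem_insert_of_mem hB)
        (fun h => hB0notin (h ▸ hB))
    set I' : Finset (Fin n) := P'.sup id with hI'def
    have hdisjBI' : Disjoint B₀ I' := by
      rw [Finset.disjoint_left]
      intro a ha hc
      obtain ⟨B, hB, haB⟩ := Finset.mem_sup.1 hc
      exact Finset.disjoint_left.1 (hdB0 B hB) ha haB
    have hIeq : (insert B₀ P').sup id = B₀ ∪ I' := by
      rw [Finset.sup_insert]
      rfl
    have hblocksub : ∀ B ∈ P', B ⊆ I' := by
      intro B hB x hx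
      exact Finset.mem_sup.2 ⟨B, hB, hx⟩
    rw [Finset.prod_insert hB0notin, principalMinor_eq_sum X B₀, ih hd',
      Finset.sum_mul_sum, ← Finset.sum_product']
    refine Finset.sum_bij (fun (x : Equiv.Perm (Fin n) × Equiv.Perm (Fin n)) _ =>
      x.1 * x.2) ?_ ?_ ?_ ?_
    · rintro ⟨τ, σ'⟩ hx
      rw [Finset.mem_product] at hx
      simp only [Finset.mem_filter, Finset.mem_univ, true_and] at hx ⊢
      have hτ := hx.1
      have hσ' := hx.2.1
      have hinv' := hx.2.2
      constructor
      · rw [hIeq]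
        intro x hx'
        by_contra hc
        rw [Finset.mem_union] at hc
        push_neg at hc
        have h1 : σ' x = x := by
          by_contra h
          exact hc.2 (hσ' (Equiv.Perm.mem_support.2 h))
        have h2 : τ x = x := by
          by_contra h
          exact hc.1 (hτ (Equiv.Perm.mem_support.2 h))
        rw [Equiv.Perm.mem_support, Equiv.Perm.mul_apply, h1, h2] at hx'
        exact hx' rfl
      · intro B hB i hi
        rcases Finset.mem_insert.1 hB with hB0 | hBP
        · have hiB0 : i ∈ B₀ := hB0 ▸ hi
          have h1 : σ' i = i := by
            by_contra h
            exact Finset.disjoint_left.1 hdisjBI' hiB0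
              (hσ' (Equiv.Perm.mem_support.2 h))
          rw [Equiv.Perm.mul_apply, h1]
          rw [hB0] at hi ⊢
          exact maps_of_support_subset hτ i hi
        · have hiI' : i ∈ I' := hblocksub B hBP hi
          have h1 : σ' i ∈ B := hinv' B hBP i hi
          have h2 : τ (σ' i) = σ' i := by
            by_contra h
            exact Finset.disjoint_left.1 hdisjBI'
              (hτ (Equiv.Perm.mem_support.2 h)) (hblocksub B hBP h1)
          rw [Equiv.Perm.mul_apply, h2]
          exact h1
    · rintro ⟨τ₁, σ₁⟩ h1 ⟨τ₂, σ₂⟩ h2 heq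
      rw [Finset.mem_product] at h1 h2
      simp only [Finset.mem_filter, Finset.mem_univ, true_and] at h1 h2 heq
      have hτeq : τ₁ = τ₂ := by
        ext x
        by_cases hx : x ∈ B₀
        · have e1 : σ₁ x = x := by
            by_contra h
            exact Finset.disjoint_left.1 hdisjBI' hx (h1.2.1 (Equiv.Perm.mem_support.2 h))
          have e2 : σ₂ x = x := by
            by_contra h
            exact Finset.disjoint_left.1 hdisjBI' hx (h2.2.1 (Equiv.Perm.mem_support.2 h))
          have := congrArg (fun f : Equiv.Perm (Fin n) => f x) heq
          simp only [Equiv.Perm.mul_apply] at this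
          rw [e1, e2] at this
          exact congrArg Fin.val this
        · have e1 : τ₁ x = x := by
            by_contra h
            exact hx (h1.1 (Equiv.Perm.mem_support.2 h))
          have e2 : τ₂ x = x := by
            by_contra h
            exact hx (h2.1 (Equiv.Perm.mem_support.2 h))
          rw [e1, e2]
      have hσeq : σ₁ = σ₂ := by
        rw [hτeq] at heq
        exact mul_left_cancel heq
      rw [Prod.mk.injEq]
      exact ⟨hτeq, hσeq⟩
    · intro σ hσ
      simp only [Finset.mem_filter, Finset.mem_univ, true_and] at hσ
      obtain ⟨hsupp, hinv⟩ := hσ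
      rw [hIeq] at hsupp
      have hinvB0 : ∀ i ∈ B₀, σ i ∈ B₀ := hinv B₀ (Finset.mem_insert_self _ _)
      have hinvI' : ∀ i ∈ I', σ i ∈ I' := by
        intro i hi
        obtain ⟨B, hB, hiB⟩ := Finset.mem_sup.1 hi
        exact hblocksub B hB (hinv B (Finset.mem_insert_of_mem hB) i hiB)
      refine ⟨⟨permRestrict σ B₀ hinvB0, permRestrict σ I' hinvI'⟩, ?_, ?_⟩
      · rw [Finset.mem_product]
        simp only [Finset.mem_filter, Finset.mem_univ, true_and]
        refine ⟨permRestrict_support hinvB0, permRestrict_support hinvI', ?_⟩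
        intro B hB i hi
        rw [permRestrict_apply_of_mem hinvI' (hblocksub B hB hi)]
        exact hinv B (Finset.mem_insert_of_mem hB) i hi
      · ext x
        simp only [Equiv.Perm.mul_apply]
        by_cases hx : x ∈ B₀
        · have hxI' : x ∉ I' := Finset.disjoint_left.1 hdisjBI' hx
          rw [permRestrict_apply_of_not_mem hinvI' hxI',
            permRestrict_apply_of_mem hinvB0 hx]
        · by_cases hx' : x ∈ I'
          · rw [permRestrict_apply_of_mem hinvI' hx']
            have : σ x ∈ I' := hinvI' x hx'
            rw [permRestrict_apply_of_not_mem hinvB0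
              (fun hc => Finset.disjoint_left.1 hdisjBI' hc this)]
          · have hσx : σ x = x := by
              by_contra h
              have := hsupp (Equiv.Perm.mem_support.2 h)
              rcases Finset.mem_union.1 this with h' | h'
              · exact hx h'
              · exact hx' h'
            rw [permRestrict_apply_of_not_mem hinvI' hx',
              permRestrict_apply_of_not_mem hinvB0 hx, hσx]
    · rintro ⟨τ, σ'⟩ hx
      rw [Finset.mem_product] at hx
      simp only [Finset.mem_filter, Finset.mem_univ, true_and] at hx
      have hτ := hx.1
      have hσ' := hx.2.1
      have hinv' := hx.2.2
      simp only
      have hsign : ((Equiv.Perm.sign (τ * σ') : ℤ) : R)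
          = ((Equiv.Perm.sign τ : ℤ) : R) * ((Equiv.Perm.sign σ' : ℤ) : R) := by
        rw [Equiv.Perm.sign_mul]
        push_cast
        ring
      have hprod : ∏ i ∈ (insert B₀ P').sup id, X i ((τ * σ') i)
          = (∏ i ∈ B₀, X i (τ i)) * ∏ i ∈ I', X i (σ' i) := by
        rw [hIeq, Finset.prod_union hdisjBI']
        congr 1
        · apply Finset.prod_congr rfl
          intro i hi
          have h1 : σ' i = i := by
            by_contra h
            exact Finset.disjoint_left.1 hdisjBI' hi (hσ' (Equiv.Perm.mem_support.2 h))
          rw [Equiv.Perm.mul_apply, h1]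
        · apply Finset.prod_congr rfl
          intro i hi
          have h1 : σ' i ∈ I' := by
            by_cases h : σ' i = i
            · rw [h]; exact hi
            · exact hσ' (Equiv.Perm.apply_mem_support.2 (Equiv.Perm.mem_support.2 h))
          have h2 : τ (σ' i) = σ' i := by
            by_contra h
            exact Finset.disjoint_left.1 hdisjBI'
              (hτ (Equiv.Perm.mem_support.2 h)) h1
          rw [Equiv.Perm.mul_apply, h2]
      rw [hsign, hprod]
      ring

theorem cycleSum_eq_principal_minor_sum {n : ℕ} {R : Type*} [CommRing R]
    (X : Matrix (Fin n) (Fin n) R) (I : Finset (Fin n)) (hI : 1 ≤ I.card) :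
    cycleSum X I =
      ∑ P ∈ Finset.univ.filter
          (fun P : Finset (Finset (Fin n)) => IsSetPartition I P),
        (-1 : R) ^ (P.card + I.card) * (P.card - 1).factorial *
          ∏ B ∈ P, principalMinor X B := by
  have hstep1 : ∀ P ∈ Finset.univ.filter
      (fun P : Finset (Finset (Fin n)) => IsSetPartition I P),
      (-1 : R) ^ (P.card + I.card) * ((P.card - 1).factorial : R) *
        ∏ B ∈ P, principalMinor X B
      = ∑ σ ∈ Finset.univ.filter (fun σ : Equiv.Perm (Fin n) => σ.support ⊆ I),
          (if (∀ B ∈ P, ∀ i ∈ B, σ i ∈ B)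
            then (-1 : R) ^ (P.card + I.card) * ((P.card - 1).factorial : R) *
              ((Equiv.Perm.sign σ : R) * ∏ i ∈ I, X i (σ i)) else 0) := by
    intro P hP
    rw [Finset.mem_filter] at hP
    have hsupP : P.sup id = I := hP.2.2.2
    rw [prod_principalMinor_eq_sum X P hP.2.2.1, hsupP, Finset.mul_sum]
    rw [← Finset.sum_filter, Finset.filter_filter]
  rw [Finset.sum_congr rfl hstep1, Finset.sum_comm]
  have hQnonempty : ∀ σ : Equiv.Perm (Fin n), (I.image (orbitOf σ)).Nonempty :=
    fun σ => Finset.image_nonempty.2 (Finset.card_pos.1 (by omega))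
  have hinner : ∀ σ ∈ Finset.univ.filter
      (fun σ : Equiv.Perm (Fin n) => σ.support ⊆ I),
      ∑ P ∈ Finset.univ.filter
          (fun P : Finset (Finset (Fin n)) => IsSetPartition I P),
        (if (∀ B ∈ P, ∀ i ∈ B, σ i ∈ B)
          then (-1 : R) ^ (P.card + I.card) * ((P.card - 1).factorial : R) *
            ((Equiv.Perm.sign σ : R) * ∏ i ∈ I, X i (σ i)) else 0)
      = ((-1 : R) ^ (I.card + 1) *
          (if (I.image (orbitOf σ)).card = 1 then 1 else 0)) *
          ((Equiv.Perm.sign σ : R) * ∏ i ∈ I, X i (σ i)) := by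
    intro σ hσ
    rw [Finset.mem_filter] at hσ
    have hsupp := hσ.2
    have h1 : ∀ P ∈ Finset.univ.filter
        (fun P : Finset (Finset (Fin n)) => IsSetPartition I P),
        (if (∀ B ∈ P, ∀ i ∈ B, σ i ∈ B)
          then (-1 : R) ^ (P.card + I.card) * ((P.card - 1).factorial : R) *
            ((Equiv.Perm.sign σ : R) * ∏ i ∈ I, X i (σ i)) else 0)
        = (if (∀ B ∈ P, ∀ i ∈ B, σ i ∈ B)
            then (-1 : R) ^ (P.card + I.card) * ((P.card - 1).factorial : R) else 0) *
          ((Equiv.Perm.sign σ : R) * ∏ i ∈ I, X i (σ i)) := by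
      intro P _
      split_ifs with h
      · rfl
      · rw [zero_mul]
    rw [Finset.sum_congr rfl h1, ← Finset.sum_mul]
    congr 1
    rw [← Finset.sum_filter]
    have hsets : (Finset.univ.filter
          (fun P : Finset (Finset (Fin n)) => IsSetPartition I P)).filter
          (fun P => ∀ B ∈ P, ∀ i ∈ B, σ i ∈ B)
        = Finset.univ.filter
            (fun P => IsCoarsening (I.image (orbitOf σ)) P) := by
      ext P
      simp only [Finset.mem_filter, Finset.mem_univ, true_and]
      constructor
      · rintro ⟨hpart, hinv⟩
        exact (invariant_iff_coarsening hsupp hpart).1 hinv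
      · intro hco
        have hpart : IsSetPartition I P := by
          have h := hco.1
          rwa [orbit_sup_eq hsupp] at h
        exact ⟨hpart, (invariant_iff_coarsening hsupp hpart).2 hco⟩
    rw [hsets]
    have h2 : ∀ P ∈ Finset.univ.filter
        (fun P => IsCoarsening (I.image (orbitOf σ)) P),
        (-1 : R) ^ (P.card + I.card) * ((P.card - 1).factorial : R)
        = (-1 : R) ^ (I.card + 1) *
            ((-1 : R) ^ (P.card - 1) * ((P.card - 1).factorial : R)) := by
      intro P hP
      rw [Finset.mem_filter] at hP
      have hc : 1 ≤ P.card := Finset.card_pos.2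
        (coars_nonempty hP.2 (hQnonempty σ) orbit_image_nonempty_blocks)
      rw [← mul_assoc, ← pow_add]
      congr 2
      omega
    rw [Finset.sum_congr rfl h2, ← Finset.mul_sum]
    congr 1
    have hz := coarsening_sum (I.image (orbitOf σ)) orbit_image_nonempty_blocks
      orbit_image_disjoint (hQnonempty σ)
    calc ∑ P ∈ Finset.univ.filter
          (fun P => IsCoarsening (I.image (orbitOf σ)) P),
          ((-1 : R) ^ (P.card - 1) * ((P.card - 1).factorial : R))
        = ((∑ P ∈ Finset.univ.filter
            (fun P => IsCoarsening (I.image (orbitOf σ)) P),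
            ((-1 : ℤ) ^ (P.card - 1) * ((P.card - 1).factorial : ℤ)) : ℤ) : R) := by
          push_cast
          rfl
      _ = _ := by
          rw [hz]
          split_ifs <;> simp
  rw [Finset.sum_congr rfl hinner]
  by_cases hd1 : I.card = 1
  · obtain ⟨i0, rfl⟩ := Finset.card_eq_one.1 hd1
    have hfil : Finset.univ.filter
        (fun σ : Equiv.Perm (Fin n) => σ.support ⊆ ({i0} : Finset (Fin n))) = {1} := by
      ext σ
      simp only [Finset.mem_filter, Finset.mem_univ, true_and, Finset.mem_singleton]
      constructor
      · intro hs
        have hcard : σ.support.card ≤ 1 := by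
          calc σ.support.card ≤ ({i0} : Finset (Fin n)).card := Finset.card_le_card hs
            _ = 1 := Finset.card_singleton i0
        have hne1 := Equiv.Perm.card_support_ne_one σ
        have h0 : σ.support.card = 0 := by omega
        rw [← Equiv.Perm.support_eq_empty_iff]
        exact Finset.card_eq_zero.1 h0
      · rintro rfl
        simp
    rw [hfil, Finset.sum_singleton]
    rw [cycleSum, if_pos (le_of_eq hd1)]
    simp
  · have hd2 : 2 ≤ I.card := by omega
    have hterm : ∀ σ ∈ Finset.univ.filter
        (fun σ : Equiv.Perm (Fin n) => σ.support ⊆ I),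
        ((-1 : R) ^ (I.card + 1) *
          (if (I.image (orbitOf σ)).card = 1 then 1 else 0)) *
          ((Equiv.Perm.sign σ : R) * ∏ i ∈ I, X i (σ i))
        = (if σ.IsCycle ∧ σ.support = I
            then (-1 : R) ^ (I.card + 1) *
              ((Equiv.Perm.sign σ : R) * ∏ i ∈ I, X i (σ i)) else 0) := by
      intro σ hσ
      rw [Finset.mem_filter] at hσ
      rw [if_congr (orbit_card_one_iff hσ.2 hd2) rfl rfl]
      split_ifs with h
      · ring
      · ring
    rw [Finset.sum_congr rfl hterm, ← Finset.sum_filter]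
    have hfil2 : (Finset.univ.filter
          (fun σ : Equiv.Perm (Fin n) => σ.support ⊆ I)).filter
          (fun σ => σ.IsCycle ∧ σ.support = I)
        = Finset.univ.filter
            (fun σ : Equiv.Perm (Fin n) => σ.IsCycle ∧ σ.support = I) := by
      ext σ
      simp only [Finset.mem_filter, Finset.mem_univ, true_and]
      exact ⟨fun h => h.2, fun h => ⟨le_of_eq h.2, h⟩⟩
    rw [hfil2]
    rw [cycleSum, if_neg (by omega)]
    apply Finset.sum_congr rfl
    intro π hπ
    rw [Finset.mem_filter] at hπ
    have hsign : ((Equiv.Perm.sign π : ℤ) : R) = (-1 : R) ^ (I.card + 1) := by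
      have hs := hπ.2.1.sign
      rw [hπ.2.2] at hs
      rw [hs]
      push_cast
      ring
    rw [hsign, ← mul_assoc, ← pow_add]
    have heven : Even ((I.card + 1) + (I.card + 1)) := ⟨I.card + 1, by ring⟩
    rw [heven.neg_one_pow, one_mul]
end

section
/- Let π_1, π_2 be two distinct cyclic permutations of {1,...,k} with full support, k ≥ 3. Then the multiset union of the directed edge-sets {(i, π_1(i))} ∪ {(i, π_2(i))} (a directed multigraph on k vertices with 2k edges) can be decomposed into a disjoint union of directed cycles each of length strictly less than k. -/
/-- The multiset of directed edges `i → σ i` over the support of a permutation `σ`. -/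
def edgeMultiset {k : ℕ} (σ : Equiv.Perm (Fin k)) : Multiset (Fin k × Fin k) :=
  σ.support.val.map (fun i => (i, σ i))

namespace UnionDecomp

open Equiv Equiv.Perm Finset

variable {k : ℕ}

lemma getElem_congr' {α : Type*} (l : List α) {i j : ℕ} (h : i = j) (hi : i < l.length) :
    l[i]'hi = l[j]'(h ▸ hi) := by subst h; rfl

lemma mem_edgeMultiset {σ : Equiv.Perm (Fin k)} {v : Fin k} (h : v ∈ σ.support) :
    (v, σ v) ∈ edgeMultiset σ :=
  Multiset.mem_map_of_mem _ h

lemma edgeMultiset_nodup (σ : Equiv.Perm (Fin k)) : (edgeMultiset σ).Nodup :=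
  Multiset.Nodup.map (fun _ _ hab => congrArg Prod.fst hab) σ.support.nodup

lemma loopless_edgeMultiset {σ : Equiv.Perm (Fin k)} {e : Fin k × Fin k}
    (h : e ∈ edgeMultiset σ) : e.1 ≠ e.2 := by
  obtain ⟨i, hi, rfl⟩ := Multiset.mem_map.1 h
  exact fun hh => (Equiv.Perm.mem_support.1 hi) hh.symm

lemma card_filter_fst (σ : Equiv.Perm (Fin k)) (v : Fin k) :
    ((edgeMultiset σ).filter (fun e => e.1 = v)).card
      = if v ∈ σ.support then 1 else 0 := by
  unfold edgeMultiset
  rw [Multiset.filter_map, Multiset.card_map]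
  have h1 : Multiset.filter ((fun e : Fin k × Fin k => e.1 = v) ∘ fun i => (i, σ i))
      σ.support.val = Multiset.filter (· = v) σ.support.val :=
    Multiset.filter_congr (fun x _ => Iff.rfl)
  rw [h1, Multiset.filter_eq', Multiset.card_replicate]
  split_ifs with h
  · exact Multiset.count_eq_one_of_mem σ.support.nodup h
  · exact Multiset.count_eq_zero_of_notMem h

lemma card_filter_snd (σ : Equiv.Perm (Fin k)) (v : Fin k) :
    ((edgeMultiset σ).filter (fun e => e.2 = v)).card
      = if v ∈ σ.support then 1 else 0 := by
  unfold edgeMultiset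
  rw [Multiset.filter_map, Multiset.card_map]
  have h1 : Multiset.filter ((fun e : Fin k × Fin k => e.2 = v) ∘ fun i => (i, σ i))
      σ.support.val = Multiset.filter (· = σ⁻¹ v) σ.support.val := by
    apply Multiset.filter_congr
    intro x _
    simp only [Function.comp]
    constructor
    · intro h; simp [← h]
    · intro h; simp [h]
  rw [h1, Multiset.filter_eq', Multiset.card_replicate]
  have h2 : σ⁻¹ v ∈ σ.support ↔ v ∈ σ.support := by
    rw [← Equiv.Perm.support_inv]
    exact Equiv.Perm.apply_mem_support
  split_ifs with h
  · exact Multiset.count_eq_one_of_mem σ.support.nodup (h2.2 h)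
  · exact Multiset.count_eq_zero_of_notMem (fun hh => h (h2.1 hh))

lemma edge_balanced (σ : Equiv.Perm (Fin k)) (v : Fin k) :
    ((edgeMultiset σ).filter (fun e => e.1 = v)).card
      = ((edgeMultiset σ).filter (fun e => e.2 = v)).card := by
  rw [card_filter_fst, card_filter_snd]

lemma edgeMultiset_formPerm (l : List (Fin k)) (hn : l.Nodup) (h2 : 2 ≤ l.length) :
    edgeMultiset l.formPerm = ((l.map (fun x => (x, l.formPerm x)) : List _) : Multiset _) := by
  unfold edgeMultiset
  rw [List.support_formPerm_of_nodup l hn (by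
    intro x hx
    rw [hx] at h2
    simp at h2)]
  have hval : (l.toFinset).val = (l : Multiset (Fin k)) := by
    rw [List.toFinset, Multiset.toFinset_val, Multiset.dedup_eq_self.mpr (Multiset.coe_nodup.2 hn)]
  rw [hval, Multiset.map_coe]

lemma edgeMultiset_formPerm_le (l : List (Fin k)) (hn : l.Nodup) (h2 : 2 ≤ l.length)
    (E : Multiset (Fin k × Fin k))
    (h : ∀ i (hi : i < l.length),
      (l[i], l[(i + 1) % l.length]'(Nat.mod_lt _ (by omega))) ∈ E) :
    edgeMultiset l.formPerm ≤ E := by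
  refine (Multiset.le_iff_subset (edgeMultiset_nodup _)).2 ?_
  intro e he
  rw [edgeMultiset_formPerm l hn h2] at he
  obtain ⟨x, hx, rfl⟩ := List.mem_map.1 (Multiset.mem_coe.1 he)
  obtain ⟨i, hi, rfl⟩ := List.mem_iff_getElem.1 hx
  rw [List.formPerm_apply_getElem l hn i hi]
  exact h i hi

/-- Close a path into a cycle.  The path is stored reversed: `v :: p` with `v` the current
endpoint; the multiset of traversed edges `(p[j], (v::p)[j])` together with a new edge
`(v, w)` with `w ∈ p` is `≤ E`. -/
lemma close_cycle (E : Multiset (Fin k × Fin k)) (v w : Fin k) (p : List (Fin k))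
    (hnd : (v :: p).Nodup) (hw : w ∈ p)
    (hle : ((v, w) ::ₘ (↑(p.zip (v :: p)) : Multiset (Fin k × Fin k))) ≤ E) :
    ∃ l : List (Fin k), l.Nodup ∧ 2 ≤ l.length ∧ edgeMultiset l.formPerm ≤ E := by
  obtain ⟨p₁, p₂, rfl⟩ := List.append_of_mem hw
  set t : List (Fin k) := v :: (p₁ ++ [w]) with ht
  have htp : v :: (p₁ ++ w :: p₂) = t ++ p₂ := by simp [ht]
  have hnt : t.Nodup := by
    rw [htp] at hnd
    exact hnd.sublist (List.sublist_append_left t p₂)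
  have hlt : t.length = p₁.length + 2 := by simp [ht]
  have hvw : (v, w) ∈ E := Multiset.mem_of_le hle (Multiset.mem_cons_self _ _)
  have hpair : ∀ a b (ha : a < t.length) (hb : b < t.length),
      ((a = 0 ∧ b = t.length - 1) ∨ (a = b + 1 ∧ b < p₁.length + 1)) →
      (t[a]'ha, t[b]'hb) ∈ E := by
    rintro a b ha hb (⟨rfl, rfl⟩ | ⟨rfl, hb1⟩)
    · have hidx : t.length - 1 = p₁.length + 1 := by omega
      have e0 : t[0]'ha = v := rfl
      have eN : t[t.length - 1]'hb = w := by
        have h' : (v :: (p₁ ++ [w]))[p₁.length + 1]'(by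
            simp only [List.length_cons, List.length_append, List.length_nil]; omega) = w := by
          rw [List.getElem_cons_succ]
          exact List.getElem_concat_length rfl _
        rw [getElem_congr' t hidx]
        exact h'
      rw [e0, eN]
      exact hvw
    · -- interior edge: (t[b+1], t[b]) is a traversed edge
      have hsplit : p₁ ++ w :: p₂ = (p₁ ++ [w]) ++ p₂ := by simp
      have hb2 : b < (p₁ ++ [w]).length := by
        simp only [List.length_append, List.length_cons, List.length_nil]; omega
      have hbp : b < (p₁ ++ w :: p₂).length := by
        simp only [List.length_append, List.length_cons]; omega
      have hbv : b < (v :: (p₁ ++ w :: p₂)).length := by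
        simp only [List.length_cons, List.length_append]; omega
      have e1 : t[b+1]'ha = (p₁ ++ w :: p₂)[b]'hbp := by
        have h' : (v :: (p₁ ++ [w]))[b+1]'(by
            simp only [List.length_cons, List.length_append, List.length_nil]; omega)
            = (p₁ ++ w :: p₂)[b]'hbp := by
          rw [List.getElem_cons_succ, List.getElem_of_eq hsplit, List.getElem_append_left hb2]
        exact h'
      have e2 : t[b]'hb = (v :: (p₁ ++ w :: p₂))[b]'hbv := by
        rw [List.getElem_of_eq htp, List.getElem_append_left hb]
      have hbz : b < ((p₁ ++ w :: p₂).zip (v :: (p₁ ++ w :: p₂))).length := by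
        rw [List.length_zip]
        simp only [List.length_append, List.length_cons, lt_min_iff]
        omega
      have hmem : ((p₁ ++ w :: p₂).zip (v :: (p₁ ++ w :: p₂)))[b]'hbz ∈
          (p₁ ++ w :: p₂).zip (v :: (p₁ ++ w :: p₂)) := List.getElem_mem hbz
      rw [List.getElem_zip] at hmem
      rw [e1, e2]
      exact Multiset.mem_of_le hle (Multiset.mem_cons_of_mem (Multiset.mem_coe.2 hmem))
  refine ⟨t.reverse, List.nodup_reverse.2 hnt, by simp [hlt], ?_⟩
  refine edgeMultiset_formPerm_le t.reverse (List.nodup_reverse.2 hnt) (by simp [hlt]) E ?_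
  intro i hi
  rw [List.length_reverse] at hi
  simp only [List.getElem_reverse, List.length_reverse]
  by_cases hend : i = t.length - 1
  · have h1 : (i + 1) % t.length = 0 := by
      rw [hend, Nat.sub_add_cancel (by omega), Nat.mod_self]
    exact hpair _ _ _ _ (Or.inl ⟨by omega, by omega⟩)
  · have h1 : (i + 1) % t.length = i + 1 := Nat.mod_eq_of_lt (by omega)
    exact hpair _ _ _ _ (Or.inr ⟨by omega, by omega⟩)

lemma exists_cycle_list (E : Multiset (Fin k × Fin k))
    (hloop : ∀ e ∈ E, e.1 ≠ e.2)
    (hbal : ∀ v, (E.filter (fun e => e.1 = v)).card = (E.filter (fun e => e.2 = v)).card)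
    (hE : E ≠ 0) :
    ∃ l : List (Fin k), l.Nodup ∧ 2 ≤ l.length ∧ edgeMultiset l.formPerm ≤ E := by
  have step : ∀ (v : Fin k) (p : List (Fin k)), (v :: p).Nodup → p ≠ [] →
      (↑(p.zip (v :: p)) : Multiset (Fin k × Fin k)) ≤ E →
      ∃ w, ((v, w) ::ₘ (↑(p.zip (v :: p)) : Multiset (Fin k × Fin k))) ≤ E ∧ w ≠ v := by
    intro v p hnd hp hle
    set used : Multiset (Fin k × Fin k) := ↑(p.zip (v :: p)) with hused
    have hfst : used.filter (fun e => e.1 = v) = 0 := by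
      rw [Multiset.filter_eq_nil]
      intro e he
      obtain ⟨h1, _⟩ := List.of_mem_zip (Multiset.mem_coe.1 he)
      exact fun hh => (List.nodup_cons.1 hnd).1 (hh ▸ h1)
    have hsnd : 1 ≤ (used.filter (fun e => e.2 = v)).card := by
      obtain ⟨x, p', rfl⟩ := List.exists_cons_of_ne_nil hp
      have hxv : (x, v) ∈ used := by
        rw [hused]
        exact Multiset.mem_coe.2 (by simp [List.zip_cons_cons])
      exact Multiset.card_pos_iff_exists_mem.2 ⟨(x, v), Multiset.mem_filter.2 ⟨hxv, rfl⟩⟩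
    have hcard : 1 ≤ ((E - used).filter (fun e => e.1 = v)).card := by
      rw [Multiset.filter_sub, Multiset.card_sub (Multiset.filter_le_filter _ hle), hbal v, hfst]
      have h3 : (used.filter (fun e => e.2 = v)).card ≤ (E.filter (fun e => e.2 = v)).card :=
        Multiset.card_le_card (Multiset.filter_le_filter _ hle)
      simp only [Multiset.card_zero]
      omega
    obtain ⟨e, he⟩ := Multiset.card_pos_iff_exists_mem.1 (lt_of_lt_of_le Nat.zero_lt_one hcard)
    obtain ⟨a, b⟩ := e
    have hefst : a = v := (Multiset.mem_filter.1 he).2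
    subst hefst
    have hemem : (a, b) ∈ E - used := (Multiset.mem_filter.1 he).1
    have heE : (a, b) ∈ E := Multiset.mem_of_le tsub_le_self hemem
    refine ⟨b, ?_, fun hh => hloop (a, b) heE (hh ▸ rfl)⟩
    rw [Multiset.le_iff_count]
    intro x
    have hcnt : used.count x ≤ E.count x := Multiset.count_le_of_le x hle
    have hcnt2 : 0 < (E - used).count (a, b) := Multiset.count_pos.2 hemem
    rw [Multiset.count_sub] at hcnt2
    rw [Multiset.count_cons]
    by_cases hx : x = (a, b)
    · subst hx
      rw [if_pos rfl]
      omega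
    · simp only [if_neg hx]
      omega
  have grow : ∀ (fuel : ℕ) (v : Fin k) (p : List (Fin k)), (v :: p).Nodup → p ≠ [] →
      (↑(p.zip (v :: p)) : Multiset (Fin k × Fin k)) ≤ E → k ≤ fuel + (v :: p).length →
      ∃ l : List (Fin k), l.Nodup ∧ 2 ≤ l.length ∧ edgeMultiset l.formPerm ≤ E := by
    intro fuel
    induction fuel with
    | zero =>
      intro v p hnd hp hle hlen
      obtain ⟨w, hw, hwv⟩ := step v p hnd hp hle
      have hcomplete : ∀ x : Fin k, x ∈ v :: p := by
        have hcard : (v :: p).length = k := le_antisymm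
          (by simpa using List.Nodup.length_le_card hnd) (by simpa using hlen)
        intro x
        have huniv : (v :: p).toFinset = Finset.univ :=
          Finset.eq_univ_of_card _
            (by rw [List.toFinset_card_of_nodup hnd, hcard, Fintype.card_fin])
        rw [← List.mem_toFinset, huniv]
        exact Finset.mem_univ x
      have hwp : w ∈ p := by
        rcases List.mem_cons.1 (hcomplete w) with h | h
        · exact absurd h hwv
        · exact h
      exact close_cycle E v w p hnd hwp hw
    | succ n ih =>
      intro v p hnd hp hle hlen
      obtain ⟨w, hw, hwv⟩ := step v p hnd hp hle
      by_cases hwp : w ∈ v :: p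
      · have hwp' : w ∈ p := by
          rcases List.mem_cons.1 hwp with h | h
          · exact absurd h hwv
          · exact h
        exact close_cycle E v w p hnd hwp' hw
      · refine ih w (v :: p) (List.nodup_cons.2 ⟨hwp, hnd⟩) (by simp) ?_
          (by simp only [List.length_cons] at hlen ⊢; omega)
        have hzz : ((v :: p).zip (w :: v :: p)) = (v, w) :: p.zip (v :: p) := by
          simp [List.zip_cons_cons]
        rw [hzz]
        rw [← Multiset.cons_coe]
        exact hw
  obtain ⟨e, he⟩ := Multiset.exists_mem_of_ne_zero hE
  obtain ⟨a, b⟩ := e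
  have hab : a ≠ b := hloop (a, b) he
  have hk : 0 < k := Fin.pos a
  refine grow k b [a] (by simp [Ne.symm hab]) (by simp) ?_ (by simp only [List.length_cons, List.length_nil]; omega)
  have hz : ([a].zip [b, a]) = [(a, b)] := rfl
  rw [hz]
  exact Multiset.singleton_le.2 he

lemma decompose :
    ∀ E : Multiset (Fin k × Fin k),
      (∀ e ∈ E, e.1 ≠ e.2) →
      (∀ v, (E.filter (fun e => e.1 = v)).card = (E.filter (fun e => e.2 = v)).card) →
      ∃ L : List (Equiv.Perm (Fin k)),
        (∀ σ ∈ L, σ.IsCycle ∧ ∀ v ∈ σ.support, ∃ e ∈ E, e.1 = v) ∧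
        (L.map edgeMultiset).sum = E := by
  intro E
  induction E using Multiset.strongInductionOn with
  | ih E ih =>
  intro hloop hbal
  by_cases hE : E = 0
  · exact ⟨[], by simp, by simp [hE]⟩
  obtain ⟨l, hnd, h2, hle⟩ := exists_cycle_list E hloop hbal hE
  set c := l.formPerm with hc
  have hcyc : c.IsCycle := List.isCycle_formPerm hnd h2
  have hpos : edgeMultiset c ≠ 0 := by
    obtain ⟨x, hx, -⟩ := hcyc
    intro h
    have : (x, c x) ∈ edgeMultiset c := mem_edgeMultiset (Equiv.Perm.mem_support.2 hx)
    rw [h] at this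
    exact absurd this (Multiset.notMem_zero _)
  have hlt : E - edgeMultiset c < E := by
    have hcle : (edgeMultiset c).card ≤ E.card := Multiset.card_le_card hle
    have hcpos : 0 < (edgeMultiset c).card := Multiset.card_pos.2 hpos
    apply lt_of_le_of_ne tsub_le_self
    intro h
    have hcc := congrArg Multiset.card h
    rw [Multiset.card_sub hle] at hcc
    omega
  obtain ⟨L, hL, hsum⟩ := ih (E - edgeMultiset c) hlt
    (fun e hh => hloop e (Multiset.mem_of_le tsub_le_self hh))
    (by
      intro v
      rw [Multiset.filter_sub, Multiset.filter_sub,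
        Multiset.card_sub (Multiset.filter_le_filter _ hle),
        Multiset.card_sub (Multiset.filter_le_filter _ hle),
        hbal v, edge_balanced c v])
  refine ⟨c :: L, ?_, ?_⟩
  · intro σ hσ
    rcases List.mem_cons.1 hσ with rfl | hσ
    · exact ⟨hcyc, fun v hv => ⟨(v, c v), Multiset.mem_of_le hle (mem_edgeMultiset hv), rfl⟩⟩
    · obtain ⟨h1, h2'⟩ := hL σ hσ
      exact ⟨h1, fun v hv => (h2' v hv).imp
        (fun e hh => ⟨Multiset.mem_of_le tsub_le_self hh.1, hh.2⟩)⟩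
  · rw [List.map_cons, List.sum_cons, hsum, add_tsub_cancel_of_le hle]


lemma key (σ : Equiv.Perm (Fin k)) (hc : σ.IsCycle) (hs : σ.support = Finset.univ)
    (i₀ x₀ : Fin k) (hx1 : x₀ ≠ i₀) (hx2 : x₀ ≠ σ i₀) :
    ∃ (c : Equiv.Perm (Fin k)) (M : Multiset (Fin k)),
      c.IsCycle ∧ c.support.card < k ∧ i₀ ∈ c.support ∧
      M ≤ (Finset.univ.val.erase i₀) ∧
      edgeMultiset c = (i₀, x₀) ::ₘ M.map (fun x => (x, σ x)) := by
  have hfix : ∀ x : Fin k, σ x ≠ x := fun x =>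
    Equiv.Perm.mem_support.1 (hs ▸ Finset.mem_univ x)
  have horder : orderOf σ = k := by
    rw [hc.orderOf, hs, Finset.card_univ, Fintype.card_fin]
  have hk0 : 0 < k := horder ▸ orderOf_pos σ
  have hinj : ∀ i j, i < k → j < k → (σ ^ i) x₀ = (σ ^ j) x₀ → i = j := by
    have key2 : ∀ i j, i ≤ j → j < k → (σ ^ i) x₀ = (σ ^ j) x₀ → i = j := by
      intro i j hij hj h
      have hfixpt : (σ ^ (j - i)) ((σ ^ i) x₀) = (σ ^ i) x₀ := by
        rw [← Equiv.Perm.mul_apply, ← pow_add, Nat.sub_add_cancel hij, ← h]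
      have h1 : σ ^ (j - i) = 1 := hc.pow_eq_one_iff.2 ⟨(σ ^ i) x₀, hfix _, hfixpt⟩
      have h2 := orderOf_dvd_of_pow_eq_one h1
      rw [horder] at h2
      have := Nat.eq_zero_of_dvd_of_lt h2
      omega
    intro i j hi hj h
    rcases le_total i j with hij | hij
    · exact key2 i j hij hj h
    · exact (key2 j i hij hi h.symm).symm
  obtain ⟨m0, hm0⟩ := hc.exists_pow_eq (hfix x₀) (hfix i₀)
  set m := m0 % k with hm
  have hmk : m < k := Nat.mod_lt _ hk0
  have hpow : σ ^ (m0 % k) = σ ^ m0 := by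
    have h1 := congrArg (fun n : ℕ => σ ^ (m0 % n)) horder
    exact h1.symm.trans (pow_mod_orderOf σ m0)
  have hmm : (σ ^ m) x₀ = i₀ := by
    rw [hm, hpow]
    exact hm0
  have hm1 : m ≠ 0 := by
    intro h
    rw [h, pow_zero] at hmm
    exact hx1 hmm
  have hmk1 : m ≠ k - 1 := by
    intro h
    apply hx2
    have hkm : m + 1 = k := by omega
    have hσk : σ ^ k = 1 := by
      have h1 := congrArg (fun n : ℕ => σ ^ n) horder
      simp only [pow_orderOf_eq_one] at h1
      exact h1.symm
    have hstep : σ ((σ ^ m) x₀) = x₀ := by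
      rw [← Equiv.Perm.mul_apply, ← pow_succ', hkm, hσk, Equiv.Perm.one_apply]
    rw [hmm] at hstep
    exact hstep.symm
  set M : List (Fin k) := (List.range m).map (fun j => (σ ^ j) x₀) with hM
  have hMnd : M.Nodup := by
    rw [hM]
    refine List.Nodup.map_on ?_ List.nodup_range
    intro a ha b hb h
    rw [List.mem_range] at ha hb
    exact hinj a b (by omega) (by omega) h
  have hiM : i₀ ∉ M := by
    rw [hM]
    intro h
    obtain ⟨j, hj, hj2⟩ := List.mem_map.1 h
    rw [List.mem_range] at hj
    have := hinj j m (by omega) hmk (hj2.trans hmm.symm)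
    omega
  set l : List (Fin k) := i₀ :: M with hl
  have hlnd : l.Nodup := List.nodup_cons.2 ⟨hiM, hMnd⟩
  have hlen : l.length = m + 1 := by simp [hl, hM]
  have h2 : 2 ≤ l.length := by omega
  have hsupp : l.formPerm.support = l.toFinset :=
    List.support_formPerm_of_nodup l hlnd (by
      intro x hx
      rw [hx] at h2
      simp at h2)
  have hget : ∀ jj, (h : jj < l.length) →
      l[jj]'h = if jj = 0 then i₀ else (σ ^ (jj - 1)) x₀ := by
    intro jj h
    match jj with
    | 0 => rfl
    | (n + 1) =>
      rw [if_neg (Nat.succ_ne_zero n)]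
      have hn : n < m := by
        rw [hlen] at h
        omega
      have h'' : (List.map (fun j => (σ ^ j) x₀) (List.range m))[n]'(by
          simp only [List.length_map, List.length_range]; omega) = (σ ^ n) x₀ := by
        rw [List.getElem_map, List.getElem_range]
      exact h''
  refine ⟨l.formPerm, (M : Multiset (Fin k)), List.isCycle_formPerm hlnd h2, ?_, ?_, ?_, ?_⟩
  · rw [hsupp, List.toFinset_card_of_nodup hlnd, hlen]
    omega
  · rw [hsupp, List.mem_toFinset, hl]
    exact List.mem_cons_self
  · rw [Multiset.le_iff_subset (Multiset.coe_nodup.2 hMnd)]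
    intro x hx
    have hxm : x ∈ M := Multiset.mem_coe.1 hx
    have hxi : x ≠ i₀ := fun h => hiM (h ▸ hxm)
    rw [Multiset.mem_erase_of_ne hxi]
    exact Finset.mem_def.1 (Finset.mem_univ x)
  · rw [edgeMultiset_formPerm l hlnd h2]
    have hfp0 : l.formPerm i₀ = x₀ := by
      have hfp := List.formPerm_apply_getElem l hlnd 0 (by omega)
      have hmod : (0 + 1) % l.length = 1 := Nat.mod_eq_of_lt (by omega)
      rw [hget 0 (by omega)] at hfp
      rw [if_pos rfl] at hfp
      rw [getElem_congr' l hmod, hget 1 (by omega)] at hfp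
      simpa using hfp
    have hfpM : ∀ x ∈ M, l.formPerm x = σ x := by
      intro x hxM
      obtain ⟨j, hj, rfl⟩ := List.mem_iff_getElem.1 hxM
      have hjm : j < m := by
        have := hj
        rw [hM] at this
        simpa using this
      have hMl : M[j]'hj = l[j+1]'(by omega) := rfl
      rw [hMl]
      have hfp := List.formPerm_apply_getElem l hlnd (j+1) (by omega)
      rw [hfp]
      have hval : l[j+1]'(by omega) = (σ ^ j) x₀ := by
        rw [hget (j+1) (by omega)]
        simp
      rw [hval]
      by_cases hjj : j + 1 < m
      · have hmod : (j + 1 + 1) % l.length = j + 2 := Nat.mod_eq_of_lt (by omega)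
        rw [getElem_congr' l hmod, hget (j+2) (by omega), if_neg (by omega)]
        have : j + 2 - 1 = j + 1 := by omega
        rw [this, pow_succ', Equiv.Perm.mul_apply]
      · have hjm2 : j + 1 = m := by omega
        have hmod : (j + 1 + 1) % l.length = 0 := by
          rw [hlen, hjm2, Nat.mod_self]
        rw [getElem_congr' l hmod, hget 0 (by omega), if_pos rfl, ← hmm, ← hjm2,
          pow_succ', Equiv.Perm.mul_apply]
    have hmap : l.map (fun x => (x, l.formPerm x)) = (i₀, x₀) :: M.map (fun x => (x, σ x)) := by
      rw [hl, List.map_cons, hfp0]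
      congr 1
      apply List.map_congr_left
      intro x hxM
      rw [hfpM x hxM]
    rw [hl] at hmap ⊢
    rw [hmap]
    rfl

end UnionDecomp

/-- The union of the edge multigraphs of two distinct full-support cycles on `k ≥ 3`
vertices decomposes into directed cycles, each of length strictly less than `k`. -/
theorem union_of_two_cycles_decomposes {k : ℕ} (hk : 3 ≤ k)
    (π₁ π₂ : Equiv.Perm (Fin k)) (h₁ : π₁.IsCycle) (h₂ : π₂.IsCycle)
    (hs₁ : π₁.support = Finset.univ) (hs₂ : π₂.support = Finset.univ)
    (hne : π₁ ≠ π₂) :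
    ∃ L : List (Equiv.Perm (Fin k)),
      (∀ σ ∈ L, σ.IsCycle ∧ σ.support.card < k) ∧
      (L.map edgeMultiset).sum = edgeMultiset π₁ + edgeMultiset π₂ := by
  classical
  have hfix1 : ∀ x, π₁ x ≠ x := fun x =>
    Equiv.Perm.mem_support.1 (hs₁ ▸ Finset.mem_univ x)
  have hfix2 : ∀ x, π₂ x ≠ x := fun x =>
    Equiv.Perm.mem_support.1 (hs₂ ▸ Finset.mem_univ x)
  obtain ⟨i₀, hi₀⟩ : ∃ i, π₁ i ≠ π₂ i := by
    by_contra h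
    push_neg at h
    exact hne (Equiv.ext h)
  obtain ⟨c₁, M₁, hcyc₁, hlt₁, hmem₁, hM₁, hE₁⟩ :=
    UnionDecomp.key π₁ h₁ hs₁ i₀ (π₂ i₀) (hfix2 i₀) (fun h => hi₀ h.symm)
  obtain ⟨c₂, M₂, hcyc₂, hlt₂, hmem₂, hM₂, hE₂⟩ :=
    UnionDecomp.key π₂ h₂ hs₂ i₀ (π₁ i₀) (hfix1 i₀) hi₀
  set E := edgeMultiset π₁ + edgeMultiset π₂ with hE
  have hsplit : ∀ (σ : Equiv.Perm (Fin k)), σ.support = Finset.univ →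
      edgeMultiset σ = (i₀, σ i₀) ::ₘ (Finset.univ.val.erase i₀).map (fun x => (x, σ x)) := by
    intro σ hs
    have hv : (Finset.univ.val : Multiset (Fin k)) = i₀ ::ₘ Finset.univ.val.erase i₀ :=
      (Multiset.cons_erase (Finset.mem_def.1 (Finset.mem_univ i₀))).symm
    rw [show edgeMultiset σ = (Finset.univ.val).map (fun i => (i, σ i)) from by
        rw [edgeMultiset, hs]]
    conv_lhs => rw [hv]
    rw [Multiset.map_cons]
  have rearr : ∀ (a b : Fin k × Fin k) (A B : Multiset (Fin k × Fin k)),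
      (a ::ₘ A) + (b ::ₘ B) = a ::ₘ b ::ₘ (A + B) := by
    intro a b A B
    simp only [← Multiset.singleton_add]
    abel
  have hD : edgeMultiset c₁ + edgeMultiset c₂ ≤ E := by
    rw [hE, hsplit π₁ hs₁, hsplit π₂ hs₂, hE₁, hE₂, rearr, rearr, Multiset.cons_swap]
    exact Multiset.cons_le_cons _ (Multiset.cons_le_cons _
      (add_le_add (Multiset.map_le_map hM₁) (Multiset.map_le_map hM₂)))
  set E' := E - (edgeMultiset c₁ + edgeMultiset c₂) with hE'
  have hloopE : ∀ e ∈ E, e.1 ≠ e.2 := by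
    intro e he
    rcases Multiset.mem_add.1 he with h | h
    exacts [UnionDecomp.loopless_edgeMultiset h, UnionDecomp.loopless_edgeMultiset h]
  have hbal2 : ∀ (σ τ : Equiv.Perm (Fin k)) (v : Fin k),
      ((edgeMultiset σ + edgeMultiset τ).filter (fun e => e.1 = v)).card
        = ((edgeMultiset σ + edgeMultiset τ).filter (fun e => e.2 = v)).card := by
    intro σ τ v
    rw [Multiset.filter_add, Multiset.filter_add, Multiset.card_add, Multiset.card_add,
      UnionDecomp.edge_balanced σ v, UnionDecomp.edge_balanced τ v]
  have hbalE' : ∀ v, (E'.filter (fun e => e.1 = v)).card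
      = (E'.filter (fun e => e.2 = v)).card := by
    intro v
    rw [hE', Multiset.filter_sub, Multiset.filter_sub,
      Multiset.card_sub (Multiset.filter_le_filter _ hD),
      Multiset.card_sub (Multiset.filter_le_filter _ hD), hE, hbal2 π₁ π₂ v, hbal2 c₁ c₂ v]
  have hout : ∀ e ∈ E', e.1 ≠ i₀ := by
    have hcard : (E'.filter (fun e => e.1 = i₀)).card = 0 := by
      rw [hE', Multiset.filter_sub, Multiset.card_sub (Multiset.filter_le_filter _ hD)]
      have hcE : (E.filter (fun e => e.1 = i₀)).card = 2 := by
        rw [hE, Multiset.filter_add, Multiset.card_add,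
          UnionDecomp.card_filter_fst, UnionDecomp.card_filter_fst, hs₁, hs₂]
        simp
      have hcD : ((edgeMultiset c₁ + edgeMultiset c₂).filter (fun e => e.1 = i₀)).card = 2 := by
        rw [Multiset.filter_add, Multiset.card_add,
          UnionDecomp.card_filter_fst, UnionDecomp.card_filter_fst,
          if_pos hmem₁, if_pos hmem₂]
      omega
    intro e he hfst
    have hmem : e ∈ E'.filter (fun e => e.1 = i₀) := Multiset.mem_filter.2 ⟨he, hfst⟩
    rw [Multiset.card_eq_zero.1 hcard] at hmem
    exact absurd hmem (Multiset.notMem_zero _)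
  obtain ⟨L', hL', hsum'⟩ := UnionDecomp.decompose E'
    (fun e he => hloopE e (Multiset.mem_of_le tsub_le_self he)) hbalE'
  refine ⟨c₁ :: c₂ :: L', ?_, ?_⟩
  · intro σ hσ
    rcases List.mem_cons.1 hσ with rfl | hσ
    · exact ⟨hcyc₁, hlt₁⟩
    rcases List.mem_cons.1 hσ with rfl | hσ
    · exact ⟨hcyc₂, hlt₂⟩
    obtain ⟨hc, hsup⟩ := hL' σ hσ
    refine ⟨hc, ?_⟩
    have hss : σ.support ⊂ Finset.univ := by
      refine Finset.ssubset_univ_iff.2 ?_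
      intro h
      obtain ⟨e, he, hfst⟩ := hsup i₀ (h ▸ Finset.mem_univ i₀)
      exact hout e he hfst
    have hcard := Finset.card_lt_card hss
    rwa [Finset.card_univ, Fintype.card_fin] at hcard
  · rw [List.map_cons, List.map_cons, List.sum_cons, List.sum_cons, hsum', hE', ← add_assoc,
      add_tsub_cancel_of_le hD]
end

section
/- Let γ : ℂ^{n²} → ℂ^M be the monomial map whose coordinates are the cycle monomials c_π = Π_{i: π(i)≠i} x_{i,π(i)} over all cyclic permutations π of subsets of {1,...,n} (M being the number of such cycles). Then the image of γ is a Zariski-closed subset of ℂ^M. -/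
namespace CycleClosed
variable {α : Type*}

def wt (d : α → α → ℝ) : List α → ℝ
  | a :: b :: t => d b a + wt d (b :: t)
  | _ => 0
@[simp] lemma wt_nil (d : α → α → ℝ) : wt d [] = 0 := rfl
@[simp] lemma wt_single (d : α → α → ℝ) (a : α) : wt d [a] = 0 := rfl
@[simp] lemma wt_cons_cons (d : α → α → ℝ) (a b : α) (t : List α) :
    wt d (a :: b :: t) = d b a + wt d (b :: t) := rfl

lemma wt_split (d : α → α → ℝ) (a : α) (v : List α) :
    ∀ u : List α, wt d (u ++ a :: v) = wt d (u ++ [a]) + wt d (a :: v)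
  | [] => by simp
  | [x] => by simp
  | x :: y :: u => by
    have h := wt_split d a v (y :: u)
    simp only [List.cons_append, wt_cons_cons] at *
    rw [h]; ring

lemma wt_append_last (d : α → α → ℝ) (x : α) :
    ∀ (l : List α) (h : l ≠ []), wt d (l ++ [x]) = wt d l + d x (l.getLast h)
  | [], h => absurd rfl h
  | [a], _ => by simp
  | a :: b :: t, _ => by
    have h := wt_append_last d x (b :: t) (by simp)
    simp only [List.cons_append] at h ⊢
    rw [wt_cons_cons d a b (t ++ [x]), h,
      List.getLast_cons (l := b :: t) (by simp), wt_cons_cons]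
    ring

lemma zip_wt (d : α → α → ℝ) :
    ∀ (xs : List α) (x y : α),
      (List.zipWith d (x :: xs) (xs ++ [y])).sum = wt d (y :: (x :: xs).reverse)
  | [], x, y => by simp
  | z :: t, x, y => by
    have ih := zip_wt d t z y
    have hne : (y :: (z :: t).reverse) ≠ [] := by simp
    have hlast : (y :: (z :: t).reverse).getLast hne = z := by
      rw [List.getLast_cons (by simp)]
      simpa using List.getLast_reverse (l := z :: t) (by simp)
    calc (List.zipWith d (x :: z :: t) ((z :: t) ++ [y])).sum
        = d x z + (List.zipWith d (z :: t) (t ++ [y])).sum := by simp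
      _ = d x z + wt d (y :: (z :: t).reverse) := by rw [ih]
      _ = wt d ((y :: (z :: t).reverse) ++ [x]) := by
          rw [wt_append_last d x _ hne, hlast]; ring
      _ = wt d (y :: (x :: z :: t).reverse) := by
          simp [List.reverse_cons]

lemma zip_chain (S : α → α → Prop) :
    ∀ (xs : List α) (x y : α),
      List.IsChain (fun a b => S b a) (y :: (x :: xs).reverse) →
      ∀ p ∈ List.zip (x :: xs) (xs ++ [y]), S p.1 p.2
  | [], x, y, h, p, hp => by
    simp only [List.reverse_cons, List.reverse_nil, List.nil_append,
      List.isChain_cons_cons, List.isChain_singleton, and_true] at h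
    simp only [List.nil_append, List.zip_cons_cons, List.zip_nil_right,
      List.mem_singleton] at hp
    subst hp; exact h
  | z :: t, x, y, h, p, hp => by
    have hsplit : (y :: (x :: z :: t).reverse) = (y :: (z :: t).reverse) ++ [x] := by
      simp
    rw [hsplit, List.isChain_append] at h
    obtain ⟨h1, -, h3⟩ := h
    have hlast : (y :: (z :: t).reverse).getLast? = some z := by
      rw [← List.head?_reverse]; simp
    have hxz : S x z := h3 z (by rw [hlast]; rfl) x rfl
    have hrest := zip_chain S t z y h1
    rcases (List.mem_cons).mp (by simpa using hp) with h' | h'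
    · subst h'; exact hxz
    · exact hrest p h'

variable [DecidableEq α]

lemma formPerm_map_zipWith {β : Type*} (f : α → α → β) (x : α) (xs : List α)
    (h : (x :: xs).Nodup) :
    (x :: xs).map (fun k => f k ((x :: xs).formPerm k)) =
      List.zipWith f (x :: xs) (xs ++ [x]) := by
  have hrot : (x :: xs).rotate 1 = xs ++ [x] := by
    simpa using List.rotate_cons_succ xs x 0
  rw [← hrot]
  apply List.ext_getElem
  · simp
  · intro i h1 h2
    have hi : i < (x :: xs).length := by simpa using h1
    rw [List.getElem_map, List.getElem_zipWith]
    rw [List.formPerm_apply_getElem _ h i hi, List.getElem_rotate]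

lemma not_nodup_decomp : ∀ {l : List α}, ¬ l.Nodup →
    ∃ (P : List α) (b : α) (v q : List α), l = P ++ b :: v ++ b :: q
  | [], h => absurd List.nodup_nil h
  | a :: t, h => by
    by_cases ha : a ∈ t
    · obtain ⟨s, u, rfl⟩ := List.append_of_mem ha
      exact ⟨[], a, s, u, by simp⟩
    · have ht : ¬ t.Nodup := by
        intro hnd; exact h (List.nodup_cons.mpr ⟨ha, hnd⟩)
      obtain ⟨P, b, v, q, rfl⟩ := not_nodup_decomp ht
      exact ⟨a :: P, b, v, q, by simp⟩


variable {S : α → α → Prop} {d : α → α → ℝ}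

lemma closed_walk_nonpos [Fintype α]
    (Hirr : ∀ i, ¬ S i i)
    (Hcyc : ∀ σ : Equiv.Perm α, σ.IsCycle → (∀ k ∈ σ.support, S k (σ k)) →
      ∑ k ∈ σ.support, d k (σ k) ≤ 0) :
    ∀ (N : ℕ) (l : List α), l.length ≤ N → List.IsChain (fun a b => S b a) l →
      2 ≤ l.length → l.head? = l.getLast? → wt d l ≤ 0 := by
  intro N
  induction N with
  | zero => intro l hl _ h2 _; omega
  | succ N ih =>
    intro l hlen hchain h2 hclosed
    obtain ⟨a, t, rfl⟩ : ∃ a t, l = a :: t := by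
      cases l with
      | nil => simp at h2
      | cons a t => exact ⟨a, t, rfl⟩
    have hlne : (a :: t) ≠ [] := by simp
    have htne : t ≠ [] := by
      intro h; subst h; simp at h2
    have hglast : (a :: t).getLast hlne = a := by
      have := hclosed
      rw [List.getLast?_eq_getLast hlne, List.head?_cons] at this
      exact (Option.some_injective _ this).symm
    have hml : (a :: t).dropLast ++ [a] = a :: t := by
      conv_rhs => rw [← List.dropLast_append_getLast hlne]
      rw [hglast]
    by_cases hnd : ((a :: t).dropLast).Nodup
    · -- Nodup case: use the permutation from the cycle
      have hdl : (a :: t).dropLast = a :: t.dropLast := by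
        rw [List.dropLast_cons_of_ne_nil htne]
      set td := t.dropLast with htd
      rw [hdl] at hnd hml
      by_cases htd0 : td = []
      · -- l = [a, a], contradiction with Hirr
        rw [htd0] at hml
        have : a :: t = [a, a] := by rw [← hml]; rfl
        rw [this] at hchain
        exact absurd (List.isChain_cons_cons.mp hchain).1 (Hirr a)
      · set c : List α := a :: td.reverse with hc
        have hcnd : c.Nodup := by
          rw [hc, List.nodup_cons, List.nodup_reverse, List.mem_reverse]
          exact List.nodup_cons.mp hnd
        have hclen : 2 ≤ c.length := by
          rw [hc]
          have : 1 ≤ td.length := List.length_pos_iff.mpr htd0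
          simp; omega
        have hlc : a :: c.reverse = a :: t := by
          rw [hc, List.reverse_cons, List.reverse_reverse]
          simpa using hml
        set σ := c.formPerm with hσ
        have hcyc : σ.IsCycle := List.isCycle_formPerm hcnd hclen
        have hsupp : σ.support = c.toFinset :=
          List.support_formPerm_of_nodup c hcnd (by
            intro x hx
            rw [hx] at hclen
            simp at hclen)
        have hzip := formPerm_map_zipWith (fun k m => (k, m)) a td.reverse (hc ▸ hcnd)
        have hedges : ∀ k ∈ σ.support, S k (σ k) := by
          intro k hk
          rw [hsupp, List.mem_toFinset] at hk
          have hmem : (k, σ k) ∈ c.map (fun k => (k, c.formPerm k)) :=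
            List.mem_map_of_mem hk
          rw [hc] at hmem
          rw [hzip] at hmem
          exact zip_chain S td.reverse a a (by rw [hlc]; exact hchain) _ hmem
        have hsum : ∑ k ∈ σ.support, d k (σ k) = wt d (a :: t) := by
          rw [hsupp, List.sum_toFinset _ hcnd]
          have hmapeq : c.map (fun k => d k (σ k)) = List.zipWith d c (td.reverse ++ [a]) := by
            rw [hc]
            exact formPerm_map_zipWith d a td.reverse (hc ▸ hcnd)
          rw [hmapeq, hc, zip_wt d td.reverse a a, ← hc, hlc]
        rw [← hsum]
        exact Hcyc σ hcyc hedges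
    · -- duplicate in the interior: excise a closed subwalk
      obtain ⟨P, b, v, q, hdec⟩ := not_nodup_decomp hnd
      have hl : a :: t = P ++ b :: v ++ b :: (q ++ [a]) := by
        rw [← hml, hdec]; simp
      -- the closed piece
      have hpiece_infix : (b :: v ++ [b]) <:+: (a :: t) := by
        refine ⟨P, q ++ [a], ?_⟩
        rw [hl]; simp
      have hpiece_chain : List.IsChain (fun a b => S b a) (b :: v ++ [b]) :=
        hchain.infix hpiece_infix
      have hpiece_closed : (b :: v ++ [b]).head? = (b :: v ++ [b]).getLast? := by
        rw [← List.head?_reverse]; simp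
      have hpiece_len : (b :: v ++ [b]).length ≤ N := by
        have h1 : (a :: t).length = P.length + v.length + q.length + 3 := by
          rw [hl]; simp only [List.length_append, List.length_cons, List.length_nil]; omega
        simp only [List.length_append, List.length_cons, List.length_nil] at hlen h1 ⊢
        omega
      have hpiece := ih _ hpiece_len hpiece_chain (by simp) hpiece_closed
      -- the excised walk
      set l' : List α := P ++ b :: (q ++ [a]) with hl'
      have hpre : List.IsChain (fun a b => S b a) (P ++ [b]) :=
        hchain.prefix (by rw [hl]; exact ⟨v ++ b :: (q ++ [a]), by simp⟩)
      have hsuf : List.IsChain (fun a b => S b a) (b :: (q ++ [a])) :=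
        hchain.suffix (by rw [hl]; exact ⟨P ++ b :: v, by simp⟩)
      have hl'chain : List.IsChain (fun a b => S b a) l' := by
        rw [hl']
        rw [List.isChain_append]
        obtain ⟨hP, -, hlink⟩ := List.isChain_append.mp hpre
        exact ⟨hP, hsuf, by simpa using hlink⟩
      have hl'len : l'.length ≤ N := by
        have h1 : (a :: t).length = P.length + v.length + q.length + 3 := by
          rw [hl]; simp only [List.length_append, List.length_cons, List.length_nil]; omega
        rw [hl']
        simp only [List.length_append, List.length_cons, List.length_nil] at hlen h1 ⊢
        omega
      have hl'2 : 2 ≤ l'.length := by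
        rw [hl']; simp only [List.length_append, List.length_cons, List.length_nil]; omega
      have hl'closed : l'.head? = l'.getLast? := by
        have hlast' : l'.getLast? = some a := by
          rw [hl']
          rw [← List.head?_reverse]
          simp
        have hhead' : l'.head? = some a := by
          have hhl : (a :: t).head? = some a := rfl
          rw [hl] at hhl
          rw [hl']
          cases P with
          | nil =>
            simp only [List.nil_append, List.head?_cons] at hhl ⊢
            exact hhl
          | cons p ps =>
            simp only [List.cons_append, List.head?_cons] at hhl ⊢
            exact hhl
        rw [hlast', hhead']
      have hl'wt := ih _ hl'len hl'chain hl'2 hl'closed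
      -- weight identity
      have hwt : wt d (a :: t) = wt d l' + wt d (b :: v ++ [b]) := by
        have e1 : wt d (a :: t) = wt d (P ++ [b]) + wt d (b :: (v ++ b :: (q ++ [a]))) := by
          rw [hl]
          have := wt_split d b (v ++ b :: (q ++ [a])) P
          simpa using this
        have e2 : wt d (b :: (v ++ b :: (q ++ [a]))) = wt d ((b :: v) ++ [b]) + wt d (b :: (q ++ [a])) := by
          have := wt_split d b (q ++ [a]) (b :: v)
          simpa using this
        have e3 : wt d l' = wt d (P ++ [b]) + wt d (b :: (q ++ [a])) := by
          rw [hl']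
          exact wt_split d b (q ++ [a]) P
        simp only [List.cons_append] at e2 ⊢
        rw [e1, e2, e3]; ring
      rw [hwt]
      linarith


lemma wt_le_card_mul [Fintype α] (D : ℝ) (hD : 0 ≤ D) (hd : ∀ a b, d b a ≤ D) :
    ∀ l : List α, wt d l ≤ l.length * D
  | [] => by simp
  | [a] => by simp [hD]
  | a :: b :: t => by
    have ih := wt_le_card_mul D hD hd (b :: t)
    have h1 : (a :: b :: t).length = (b :: t).length + 1 := rfl
    rw [wt_cons_cons, h1]
    push_cast
    have := hd a b
    nlinarith [ih, hd a b]

lemma walk_bound [Fintype α]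
    (Hirr : ∀ i, ¬ S i i)
    (Hcyc : ∀ σ : Equiv.Perm α, σ.IsCycle → (∀ k ∈ σ.support, S k (σ k)) →
      ∑ k ∈ σ.support, d k (σ k) ≤ 0)
    (D : ℝ) (hD : 0 ≤ D) (hd : ∀ a b, d b a ≤ D) :
    ∀ (N : ℕ) (l : List α), l.length ≤ N → List.IsChain (fun a b => S b a) l →
      wt d l ≤ (Fintype.card α) * D := by
  intro N
  induction N with
  | zero =>
    intro l hl _
    interval_cases h : l.length
    · have : l = [] := List.length_eq_zero_iff.mp h
      subst this
      simp [mul_nonneg (Nat.cast_nonneg _) hD]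
  | succ N ih =>
    intro l hlen hchain
    by_cases hnd : l.Nodup
    · calc wt d l ≤ l.length * D := wt_le_card_mul D hD hd l
        _ ≤ (Fintype.card α) * D := by
          have := hnd.length_le_card
          exact mul_le_mul_of_nonneg_right (by exact_mod_cast this) hD
    · obtain ⟨P, b, v, q, rfl⟩ := not_nodup_decomp hnd
      -- piece and excised walk
      have hpiece_infix : (b :: v ++ [b]) <:+: (P ++ b :: v ++ b :: q) := by
        refine ⟨P, q, ?_⟩; simp
      have hpiece_chain : List.IsChain (fun a b => S b a) (b :: v ++ [b]) :=
        hchain.infix hpiece_infix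
      have hpiece_closed : (b :: v ++ [b]).head? = (b :: v ++ [b]).getLast? := by
        rw [← List.head?_reverse]; simp
      have hpiece : wt d (b :: v ++ [b]) ≤ 0 :=
        closed_walk_nonpos Hirr Hcyc (b :: v ++ [b]).length _ le_rfl hpiece_chain
          (by simp only [List.length_append, List.length_cons, List.length_nil]; omega)
          hpiece_closed
      have hpre : List.IsChain (fun a b => S b a) (P ++ [b]) :=
        hchain.prefix ⟨v ++ b :: q, by simp⟩
      have hsuf : List.IsChain (fun a b => S b a) (b :: q) :=
        hchain.suffix ⟨P ++ b :: v, by simp⟩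
      have hl'chain : List.IsChain (fun a b => S b a) (P ++ b :: q) := by
        rw [List.isChain_append]
        obtain ⟨hP, -, hlink⟩ := List.isChain_append.mp hpre
        exact ⟨hP, hsuf, by simpa using hlink⟩
      have hl'len : (P ++ b :: q).length ≤ N := by
        simp only [List.length_append, List.length_cons, List.length_nil] at hlen ⊢
        omega
      have hl' := ih _ hl'len hl'chain
      have hwt : wt d (P ++ b :: v ++ b :: q) =
          wt d (P ++ b :: q) + wt d (b :: v ++ [b]) := by
        have e1 : wt d (P ++ b :: (v ++ b :: q)) =
            wt d (P ++ [b]) + wt d (b :: (v ++ b :: q)) := wt_split d b (v ++ b :: q) P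
        have e2 : wt d (b :: (v ++ b :: q)) =
            wt d ((b :: v) ++ [b]) + wt d (b :: q) := by
          have := wt_split d b q (b :: v)
          simpa using this
        have e3 : wt d (P ++ b :: q) = wt d (P ++ [b]) + wt d (b :: q) := wt_split d b q P
        simp only [List.cons_append, List.append_assoc] at e1 e2 e3 ⊢
        linarith
      rw [hwt]
      linarith

lemma exists_potential [Fintype α]
    (Hirr : ∀ i, ¬ S i i)
    (Hcyc : ∀ σ : Equiv.Perm α, σ.IsCycle → (∀ k ∈ σ.support, S k (σ k)) →
      ∑ k ∈ σ.support, d k (σ k) ≤ 0) :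
    ∃ w : α → ℝ, ∀ i j, S i j → d i j + w i - w j ≤ 0 := by
  classical
  set D : ℝ := ∑ a : α, ∑ b : α, |d b a| with hDdef
  have hD : 0 ≤ D := Finset.sum_nonneg fun a _ => Finset.sum_nonneg fun b _ => abs_nonneg _
  have hd : ∀ a b, d b a ≤ D := by
    intro a b
    calc d b a ≤ |d b a| := le_abs_self _
      _ ≤ ∑ c : α, |d c a| :=
        Finset.single_le_sum (f := fun c => |d c a|) (fun c _ => abs_nonneg _)
          (Finset.mem_univ b)
      _ ≤ D := by
        rw [hDdef]
        exact Finset.single_le_sum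
          (f := fun x => ∑ c : α, |d c x|)
          (fun c _ => Finset.sum_nonneg fun e _ => abs_nonneg _) (Finset.mem_univ a)
  set B : ℝ := (Fintype.card α) * D with hB
  set W : α → Set ℝ := fun j =>
    {r | ∃ l : List α, List.IsChain (fun a b => S b a) l ∧ l.head? = some j ∧ wt d l = r}
    with hW
  have hne : ∀ j, (W j).Nonempty := fun j => ⟨0, [j], by simp, rfl, rfl⟩
  have hbdd : ∀ j, BddAbove (W j) := by
    intro j
    refine ⟨B, ?_⟩
    rintro r ⟨l, hc, -, rfl⟩
    exact walk_bound Hirr Hcyc D hD hd l.length l le_rfl hc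
  refine ⟨fun j => sSup (W j), ?_⟩
  intro i j hij
  have h1 : ∀ r ∈ W i, r + d i j ≤ sSup (W j) := by
    rintro r ⟨l, hc, hh, rfl⟩
    obtain ⟨t, rfl⟩ : ∃ t, l = i :: t := by
      cases l with
      | nil => simp at hh
      | cons x t =>
        rw [List.head?_cons, Option.some_inj] at hh
        exact ⟨t, by rw [hh]⟩
    apply le_csSup (hbdd j)
    refine ⟨j :: i :: t, List.isChain_cons_cons.mpr ⟨hij, hc⟩, rfl, ?_⟩
    rw [wt_cons_cons]; ring
  have h2 : sSup (W i) ≤ sSup (W j) - d i j := by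
    apply csSup_le (hne i)
    intro r hr
    linarith [h1 r hr]
  linarith


lemma key (n : ℕ) (R : ℝ) (hR : 1 ≤ R) (X : Matrix (Fin n) (Fin n) ℂ)
    (hXR : ∀ σ : Equiv.Perm (Fin n), σ.IsCycle →
      ‖∏ i ∈ σ.support, X i (σ i)‖ ≤ R) :
    ∃ Y : Matrix (Fin n) (Fin n) ℂ,
      (∀ σ : Equiv.Perm (Fin n), σ.IsCycle →
        ∏ i ∈ σ.support, Y i (σ i) = ∏ i ∈ σ.support, X i (σ i)) ∧
      ∀ i j, ‖Y i j‖ ≤ R := by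
  classical
  set S : Fin n → Fin n → Prop := fun i j =>
    ∃ σ : Equiv.Perm (Fin n), σ.IsCycle ∧ (∀ k ∈ σ.support, X k (σ k) ≠ 0) ∧
      i ∈ σ.support ∧ σ i = j with hS
  have hSne : ∀ i j, S i j → X i j ≠ 0 := by
    rintro i j ⟨σ, hσ, hnz, hi, rfl⟩; exact hnz i hi
  have Hirr : ∀ i, ¬ S i i := by
    rintro i ⟨σ, hσ, hnz, hi, hfix⟩
    exact (Equiv.Perm.mem_support.mp hi) hfix
  have hR0 : (0:ℝ) < R := lt_of_lt_of_le one_pos hR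
  set M : ℝ := Real.log R with hM
  have hM0 : 0 ≤ M := Real.log_nonneg hR
  set d : Fin n → Fin n → ℝ := fun i j => Real.log (‖X i j‖) - M with hd
  have Hcyc : ∀ σ : Equiv.Perm (Fin n), σ.IsCycle → (∀ k ∈ σ.support, S k (σ k)) →
      ∑ k ∈ σ.support, d k (σ k) ≤ 0 := by
    intro σ hσ hedge
    have hnz : ∀ k ∈ σ.support, X k (σ k) ≠ 0 := by
      intro k hk
      obtain ⟨τ, hτ, hτnz, hkτ, hτk⟩ := hedge k hk
      have := hτnz k hkτ
      rwa [hτk] at this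
    have hprodpos : 0 < ‖∏ i ∈ σ.support, X i (σ i)‖ := by
      rw [norm_prod]
      exact Finset.prod_pos fun k hk => norm_pos_iff.mpr (hnz k hk)
    have hlogsum : ∑ k ∈ σ.support, Real.log (‖X k (σ k)‖)
        = Real.log (‖∏ i ∈ σ.support, X i (σ i)‖) := by
      rw [norm_prod]
      exact (Real.log_prod fun k hk =>
        (norm_ne_zero_iff.mpr (hnz k hk))).symm
    have hcard : 1 ≤ (σ.support.card : ℝ) := by
      have h2 : 1 ≤ σ.support.card := le_trans one_le_two hσ.two_le_card_support
      exact_mod_cast h2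
    have hlogle : Real.log (‖∏ i ∈ σ.support, X i (σ i)‖) ≤ M := by
      rw [hM]
      exact Real.log_le_log hprodpos (hXR σ hσ)
    have : ∑ k ∈ σ.support, d k (σ k)
        = (∑ k ∈ σ.support, Real.log (‖X k (σ k)‖)) - σ.support.card * M := by
      rw [hd]
      rw [Finset.sum_sub_distrib]
      simp [Finset.sum_const, nsmul_eq_mul]
    rw [this, hlogsum]
    nlinarith
  obtain ⟨w, hw⟩ := exists_potential Hirr Hcyc
  set Y : Matrix (Fin n) (Fin n) ℂ :=
    fun i j => if S i j then X i j * Complex.exp (((w i - w j : ℝ) : ℂ)) else 0 with hY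
  have hYij : ∀ i j, Y i j
      = if S i j then X i j * Complex.exp (((w i - w j : ℝ) : ℂ)) else 0 :=
    fun i j => rfl
  refine ⟨Y, ?_, ?_⟩
  · intro σ hσ
    by_cases hz : ∀ k ∈ σ.support, X k (σ k) ≠ 0
    · have hedge : ∀ k ∈ σ.support, S k (σ k) := fun k hk => ⟨σ, hσ, hz, hk, rfl⟩
      have : ∀ k ∈ σ.support,
          Y k (σ k)
          = X k (σ k) * Complex.exp (((w k - w (σ k) : ℝ) : ℂ)) := fun k hk => by
        rw [hYij]; exact if_pos (hedge k hk)
      rw [Finset.prod_congr rfl this, Finset.prod_mul_distrib, ← Complex.exp_sum]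
      have hsum : ∑ k ∈ σ.support, (((w k - w (σ k) : ℝ) : ℂ)) = 0 := by
        push_cast
        rw [Finset.sum_sub_distrib]
        rw [Equiv.Perm.sum_comp σ σ.support (fun k => ((w k : ℝ) : ℂ))
          (fun a ha => Equiv.Perm.mem_support.mpr ha)]
        ring
      rw [hsum, Complex.exp_zero, mul_one]
    · push_neg at hz
      obtain ⟨k₀, hk₀, hk₀z⟩ := hz
      rw [Finset.prod_eq_zero hk₀ (by rw [hYij, hk₀z]; split <;> simp),
        Finset.prod_eq_zero hk₀ hk₀z]
  · intro i j
    rw [hYij i j]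
    by_cases h : S i j
    · rw [if_pos h]
      have hXpos : 0 < ‖X i j‖ := norm_pos_iff.mpr (hSne i j h)
      rw [norm_mul, Complex.norm_exp]
      have hre : ((((w i - w j : ℝ)) : ℂ)).re = w i - w j := Complex.ofReal_re _
      rw [hre]
      have h1 : ‖X i j‖ = Real.exp (Real.log (‖X i j‖)) :=
        (Real.exp_log hXpos).symm
      rw [h1, ← Real.exp_add]
      have h2 := hw i j h
      rw [hd] at h2
      have h3 : Real.log (‖X i j‖) + (w i - w j) ≤ M := by
        simp only at h2
        linarith
      calc Real.exp (Real.log (‖X i j‖) + (w i - w j))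
          ≤ Real.exp M := Real.exp_le_exp.mpr h3
        _ = R := by rw [hM, Real.exp_log hR0]
    · rw [if_neg h]
      simpa using le_of_lt hR0


end CycleClosed

set_option maxHeartbeats 1000000 in
/-- The image of the cycle-monomial map is closed in `ℂ^M`, where the coordinates
are indexed by the cyclic permutations of subsets of `{1,…,n}`. -/
theorem image_cycle_monomial_map_closed (n : ℕ) :
    IsClosed (Set.range (fun X : Matrix (Fin n) (Fin n) ℂ =>
      fun π : {σ : Equiv.Perm (Fin n) // σ.IsCycle} =>
        ∏ i ∈ (π : Equiv.Perm (Fin n)).support, X i ((π : Equiv.Perm (Fin n)) i))) := by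
  classical
  set C := {σ : Equiv.Perm (Fin n) // σ.IsCycle} with hC
  haveI : Fintype C := Fintype.ofFinite _
  set γ : Matrix (Fin n) (Fin n) ℂ → (C → ℂ) := fun X π =>
    ∏ i ∈ (π : Equiv.Perm (Fin n)).support, X i ((π : Equiv.Perm (Fin n)) i) with hγ
  have hγcont : Continuous γ := by
    apply continuous_pi
    intro π
    apply continuous_finset_prod
    intro i _
    exact (continuous_apply ((π : Equiv.Perm (Fin n)) i)).comp (continuous_apply i)
  set N : (C → ℂ) → ℝ := fun y => max 1 (∑ π : C, ‖y π‖) with hN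
  have hNcont : Continuous N := by
    apply Continuous.max continuous_const
    apply continuous_finset_sum
    intro π _
    exact continuous_norm.comp (continuous_apply π)
  have hN1 : ∀ y, 1 ≤ N y := fun y => le_max_left _ _
  have hNbound : ∀ (y : C → ℂ) (π : C), ‖y π‖ ≤ N y := by
    intro y π
    refine le_trans ?_ (le_max_right _ _)
    exact Finset.single_le_sum (f := fun π => ‖y π‖)
      (fun _ _ => norm_nonneg _) (Finset.mem_univ π)
  apply IsSeqClosed.isClosed
  intro u p hu hup
  -- a uniform bound
  set R : ℝ := N p + 1 with hR
  have hNu : Filter.Tendsto (fun k => N (u k)) Filter.atTop (nhds (N p)) :=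
    (hNcont.tendsto p).comp hup
  have hev : ∀ᶠ k in Filter.atTop, N (u k) ≤ R :=
    hNu.eventually (eventually_le_nhds (by rw [hR]; linarith))
  obtain ⟨N0, hN0⟩ := Filter.eventually_atTop.mp hev
  choose X hX using hu
  have hR1 : 1 ≤ R := by have := hN1 p; rw [hR]; linarith
  have hkey : ∀ k : ℕ, ∃ Y : Matrix (Fin n) (Fin n) ℂ,
      (∀ σ : Equiv.Perm (Fin n), σ.IsCycle →
        ∏ i ∈ σ.support, Y i (σ i) = ∏ i ∈ σ.support, (X (k + N0)) i (σ i)) ∧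
      ∀ i j, ‖Y i j‖ ≤ R := by
    intro k
    apply CycleClosed.key n R hR1 (X (k + N0))
    intro σ hσ
    have h1 : (∏ i ∈ σ.support, (X (k + N0)) i (σ i)) = u (k + N0) ⟨σ, hσ⟩ := by
      have := hX (k + N0)
      rw [hγ] at this
      exact congrFun this ⟨σ, hσ⟩
    rw [h1]
    exact le_trans (hNbound _ _) (hN0 (k + N0) (Nat.le_add_left _ _))
  choose Y hY1 hY2 using hkey
  set K : Set (Matrix (Fin n) (Fin n) ℂ) :=
    Set.univ.pi fun _ => Set.univ.pi fun _ => Metric.closedBall (0:ℂ) R with hK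
  have hKcomp : IsCompact K :=
    isCompact_univ_pi fun _ => isCompact_univ_pi fun _ => isCompact_closedBall 0 R
  have hYmem : ∀ k, Y k ∈ K := by
    intro k
    rw [hK]
    refine Set.mem_univ_pi.mpr ?_
    intro i
    rw [Set.mem_univ_pi]
    intro j
    rw [Metric.mem_closedBall, Complex.dist_eq, sub_zero]
    exact hY2 k i j
  haveI : FirstCountableTopology (Matrix (Fin n) (Fin n) ℂ) :=
    inferInstanceAs (FirstCountableTopology (Fin n → Fin n → ℂ))
  obtain ⟨Z, hZK, φ, hφ, hconv⟩ := hKcomp.tendsto_subseq hYmem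
  have hγY : ∀ k, γ (Y k) = u (k + N0) := by
    intro k
    funext π
    have h1 : γ (Y k) π = ∏ i ∈ (π : Equiv.Perm (Fin n)).support, (Y k) i ((π : Equiv.Perm (Fin n)) i) := rfl
    rw [h1, hY1 k π.1 π.2]
    have := hX (k + N0)
    rw [hγ] at this
    exact congrFun this π
  have hsub : Filter.Tendsto (fun k => φ k + N0) Filter.atTop Filter.atTop :=
    (Filter.tendsto_add_atTop_nat N0).comp hφ.tendsto_atTop
  have hlim1 : Filter.Tendsto (fun k => γ (Y (φ k))) Filter.atTop (nhds (γ Z)) :=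
    (hγcont.tendsto Z).comp hconv
  have hlim2 : Filter.Tendsto (fun k => γ (Y (φ k))) Filter.atTop (nhds p) := by
    have : (fun k => γ (Y (φ k))) = fun k => u (φ k + N0) := by
      funext k; exact hγY (φ k)
    rw [this]
    exact hup.comp hsub
  exact ⟨Z, tendsto_nhds_unique hlim1 hlim2⟩
end

section
/- Stillman's primality criterion: Let J be an ideal in k[x_1, ..., x_n] containing a polynomial f = g·x_1 + h where g and h do not involve x_1, and suppose g is a non-zerodivisor modulo J. Then J is prime if and only if the elimination ideal J ∩ k[x_2, ..., x_n] is prime. -/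
/-- Stillman's primality criterion. We model `k[x₁,…,xₙ]` as `(k[x₂,…,xₙ])[x₁]`,
i.e. as `Polynomial (MvPolynomial (Fin n) k)`, with `x₁ = Polynomial.X`; the
elimination ideal `J ∩ k[x₂,…,xₙ]` is the contraction along `Polynomial.C`. -/
theorem stillman_primality_criterion {k : Type*} [Field k] (n : ℕ)
    (J : Ideal (Polynomial (MvPolynomial (Fin n) k)))
    (g h : MvPolynomial (Fin n) k)
    (hf : Polynomial.C g * Polynomial.X + Polynomial.C h ∈ J)
    (hg : ∀ p : Polynomial (MvPolynomial (Fin n) k),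
      Polynomial.C g * p ∈ J → p ∈ J) :
    J.IsPrime ↔
      (J.comap (Polynomial.C :
        MvPolynomial (Fin n) k →+* Polynomial (MvPolynomial (Fin n) k))).IsPrime := by
  constructor
  · intro hJ
    exact hJ.comap _
  · intro hJ'
    -- iterated non-zerodivisor property
    have hg' : ∀ (m : ℕ) (p : Polynomial (MvPolynomial (Fin n) k)),
        (Polynomial.C g) ^ m * p ∈ J → p ∈ J := by
      intro m
      induction m with
      | zero => intro p hp; simpa using hp
      | succ m ih =>
        intro p hp
        apply ih
        apply hg
        have : Polynomial.C g * ((Polynomial.C g) ^ m * p)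
            = (Polynomial.C g) ^ (m + 1) * p := by ring
        rw [this]; exact hp
    -- key reduction lemma
    have key : ∀ p : Polynomial (MvPolynomial (Fin n) k),
        ∃ (m : ℕ) (a : MvPolynomial (Fin n) k),
          (Polynomial.C g) ^ m * p - Polynomial.C a ∈ J := by
      intro p
      induction p using Polynomial.induction_on' with
      | add p q hp hq =>
        obtain ⟨m, a, hm⟩ := hp
        obtain ⟨l, b, hl⟩ := hq
        refine ⟨m + l, g ^ l * a + g ^ m * b, ?_⟩
        have hmem := J.add_mem (J.mul_mem_left ((Polynomial.C g) ^ l) hm)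
          (J.mul_mem_left ((Polynomial.C g) ^ m) hl)
        have heq : (Polynomial.C g) ^ l * ((Polynomial.C g) ^ m * p - Polynomial.C a)
            + (Polynomial.C g) ^ m * ((Polynomial.C g) ^ l * q - Polynomial.C b)
            = (Polynomial.C g) ^ (m + l) * (p + q)
              - Polynomial.C (g ^ l * a + g ^ m * b) := by
          simp only [map_add, map_mul, map_pow]
          ring
        rwa [heq] at hmem
      | monomial i a =>
        refine ⟨i, a * (-h) ^ i, ?_⟩
        have hX : Polynomial.C g * Polynomial.X - (- Polynomial.C h) ∈ J := by
          simpa [sub_neg_eq_add] using hf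
        have hpow : (Polynomial.C g * Polynomial.X) ^ i - (- Polynomial.C h) ^ i ∈ J := by
          obtain ⟨c, hc⟩ := sub_dvd_pow_sub_pow (Polynomial.C g * Polynomial.X)
            (- Polynomial.C h) i
          rw [hc]
          exact J.mul_mem_right c hX
        have hmem := J.mul_mem_left (Polynomial.C a) hpow
        have heq : Polynomial.C a * ((Polynomial.C g * Polynomial.X) ^ i
              - (- Polynomial.C h) ^ i)
            = (Polynomial.C g) ^ i * Polynomial.monomial i a
              - Polynomial.C (a * (-h) ^ i) := by
          rw [Polynomial.C_mul_X_pow_eq_monomial.symm]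
          simp only [map_mul, map_pow, map_neg]
          ring
        rwa [heq] at hmem
    constructor
    · intro htop
      apply hJ'.ne_top
      rw [Ideal.eq_top_iff_one] at htop ⊢
      simpa using htop
    · intro p q hpq
      obtain ⟨m, a, hm⟩ := key p
      obtain ⟨l, b, hl⟩ := key q
      have hab : a * b ∈ J.comap (Polynomial.C :
          MvPolynomial (Fin n) k →+* Polynomial (MvPolynomial (Fin n) k)) := by
        rw [Ideal.mem_comap]
        have h1 : ((Polynomial.C g) ^ m * p - Polynomial.C a) * ((Polynomial.C g) ^ l * q)
            + Polynomial.C a * ((Polynomial.C g) ^ l * q - Polynomial.C b) ∈ J :=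
          J.add_mem (J.mul_mem_right _ hm) (J.mul_mem_left _ hl)
        have h2 : (Polynomial.C g) ^ (m + l) * (p * q) ∈ J :=
          J.mul_mem_left _ hpq
        have heq : (Polynomial.C g) ^ (m + l) * (p * q)
            - (((Polynomial.C g) ^ m * p - Polynomial.C a) * ((Polynomial.C g) ^ l * q)
              + Polynomial.C a * ((Polynomial.C g) ^ l * q - Polynomial.C b))
            = Polynomial.C (a * b) := by
          simp only [map_mul]
          ring
        have := J.sub_mem h2 h1
        rwa [heq] at this
      rcases hJ'.mem_or_mem hab with ha | hb
      · left
        rw [Ideal.mem_comap] at ha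
        apply hg' m
        have : (Polynomial.C g) ^ m * p
            = ((Polynomial.C g) ^ m * p - Polynomial.C a) + Polynomial.C a := by ring
        rw [this]
        exact J.add_mem hm ha
      · right
        rw [Ideal.mem_comap] at hb
        apply hg' l
        have : (Polynomial.C g) ^ l * q
            = ((Polynomial.C g) ^ l * q - Polynomial.C b) + Polynomial.C b := by ring
        rw [this]
        exact J.add_mem hl hb
end

section
/- For a generic 4×4 matrix (c_{ij}) (entries being indeterminates over ℚ), the ideal generated by the 3×3 minors of the 4×4 matrix whose (i,i) entries are c_{ii}+x, c_{22}+y, c_{33}+z, c_{44}+w on the diagonal (i.e., diag(x,y,z,w) added to (c_{ij})) in the polynomial ring K[x,y,z,w], K = ℚ(c_{11},...,c_{44}), is a radical zero-dimensional ideal whose variety consists of exactly two distinct points over the algebraic closure of K. -/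
/-- The field `K = ℚ(c₁₁,…,c₄₄)` of rational functions in the 16 generic entries. -/
abbrev genField : Type := FractionRing (MvPolynomial (Fin 4 × Fin 4) ℚ)

/-- The generic entry `c_{ij}` viewed in `K`. -/
noncomputable def c (i j : Fin 4) : genField :=
  algebraMap (MvPolynomial (Fin 4 × Fin 4) ℚ) genField (MvPolynomial.X (i, j))

/-- The matrix `C + diag(x,y,z,w)` over `K[x,y,z,w]`. -/
noncomputable def M : Matrix (Fin 4) (Fin 4) (MvPolynomial (Fin 4) genField) :=
  fun i j => MvPolynomial.C (c i j) + if i = j then MvPolynomial.X i else 0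

/-- The ideal generated by the `3×3` minors of `M` in `K[x,y,z,w]`. -/
noncomputable def minors3Ideal : Ideal (MvPolynomial (Fin 4) genField) :=
  Ideal.span {p | ∃ r s : Fin 3 ↪ Fin 4, p = (M.submatrix r s).det}

noncomputable section
namespace MR
open MvPolynomial

abbrev PP : Type := MvPolynomial (Fin 4 × Fin 4) ℚ
abbrev R4 : Type := MvPolynomial (Fin 4) genField
abbrev L : Type := AlgebraicClosure genField

def xP (i j : Fin 4) : PP := X (i, j)

@[irreducible] def pDc : PP := xP 0 2 * xP 1 3 - xP 0 3 * xP 1 2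
@[irreducible] def pa0 : PP := xP 1 3 * xP 0 0 - xP 0 3 * xP 1 0
@[irreducible] def pa1 : PP := xP 1 3
@[irreducible] def pb0 : PP := xP 0 2 * xP 1 0 - xP 1 2 * xP 0 0
@[irreducible] def pb1 : PP := -xP 1 2
@[irreducible] def pc0 : PP := xP 1 3 * xP 0 1 - xP 0 3 * xP 1 1
@[irreducible] def pc1 : PP := -xP 0 3
@[irreducible] def pd0 : PP := xP 0 2 * xP 1 1 - xP 1 2 * xP 0 1
@[irreducible] def pd1 : PP := xP 0 2
@[irreducible] def pf10 : PP := pDc * xP 2 0 - pa0 * xP 2 2 - pb0 * xP 2 3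
@[irreducible] def pf11 : PP := -(pa1 * xP 2 2) - pb1 * xP 2 3
@[irreducible] def pf20 : PP := pDc * xP 3 0 - pa0 * xP 3 2 - pb0 * xP 3 3
@[irreducible] def pf21 : PP := -(pa1 * xP 3 2) - pb1 * xP 3 3
@[irreducible] def pg10 : PP := pDc * xP 2 1 - pc0 * xP 2 2 - pd0 * xP 2 3
@[irreducible] def pg11 : PP := -(pc1 * xP 2 2) - pd1 * xP 2 3
@[irreducible] def pg20 : PP := pDc * xP 3 1 - pc0 * xP 3 2 - pd0 * xP 3 3
@[irreducible] def pg21 : PP := -(pc1 * xP 3 2) - pd1 * xP 3 3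
@[irreducible] def pp : PP := -(pDc * pc1 * xP 2 0) + xP 2 3 * (pb0 * pc1 - pa0 * pd1)
@[irreducible] def pq : PP := xP 2 3 * (pb1 * pc1 - pa1 * pd1)
@[irreducible] def pr0 : PP := pDc * pa0 * xP 2 1 - pDc * pc0 * xP 2 0 + xP 2 3 * (pb0 * pc0 - pa0 * pd0)
@[irreducible] def ps0 : PP := pDc * pa1 * xP 2 1 + xP 2 3 * (pb1 * pc0 - pa1 * pd0)
@[irreducible] def pv10 : PP := -(pDc * pd1 * xP 3 0) + xP 3 2 * (pa0 * pd1 - pb0 * pc1)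
@[irreducible] def pv11 : PP := xP 3 2 * (pa1 * pd1 - pb1 * pc1)
@[irreducible] def pv00 : PP := pDc * pb0 * xP 3 1 - pDc * pd0 * xP 3 0 + xP 3 2 * (pa0 * pd0 - pb0 * pc0)
@[irreducible] def pv01 : PP := pDc * pb1 * xP 3 1 + xP 3 2 * (pa1 * pd0 - pb1 * pc0)
@[irreducible] def pe : PP := pv10 * pr0 - pp * pv00
@[irreducible] def pf : PP := pv10 * ps0 + pv11 * pr0 - pp * pv01 - pq * pv00
@[irreducible] def pgq : PP := pv11 * ps0 - pq * pv01
@[irreducible] def prho (u v : PP) : PP := pgq * u * u - pf * u * v + pe * v * v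
@[irreducible] def psig0 (u v r s : PP) : PP := pgq * (pgq * u - v * pf) * r + pgq * v * s * pe
@[irreducible] def psig1 (u v r s : PP) : PP := pgq * (pgq * u - v * pf) * s - pgq * pgq * v * r + pgq * v * s * pf
@[irreducible] def pdisc : PP := pf * pf - 4 * (pe * pgq)

@[irreducible] def kk (u : PP) : genField := algebraMap PP genField u
@[irreducible] def Ck (u : PP) : R4 := C (kk u)

lemma Ck_mul (u v : PP) : Ck (u*v) = Ck u * Ck v := by unfold Ck kk; rw [map_mul, C_mul]
lemma Ck_add (u v : PP) : Ck (u+v) = Ck u + Ck v := by unfold Ck kk; rw [map_add, C_add]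
lemma Ck_sub (u v : PP) : Ck (u-v) = Ck u - Ck v := by unfold Ck kk; rw [map_sub, C_sub]
lemma Ck_neg (u : PP) : Ck (-u) = -Ck u := by unfold Ck kk; rw [map_neg, C_neg]
lemma Ck_x (i j : Fin 4) : Ck (xP i j) = C (c i j) := by unfold Ck kk; rfl

/-- normalized bilinear polynomial shape `(r + s·x) + (u + v·x)·X i` -/
def PtP (u v r s : PP) (i : Fin 4) : R4 :=
  (Ck r + Ck s * X 0) + (Ck u + Ck v * X 0) * X i

def P1n : R4 := PtP (-pa0) (-pa1) pf10 pf11 2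
def P2n : R4 := PtP (-pb0) (-pb1) pf20 pf21 3
def P3n : R4 := (Ck pg10 + Ck pg11 * X 1) + (Ck (-pc0) + Ck (-pc1) * X 1) * X 2
def P4n : R4 := (Ck pg20 + Ck pg21 * X 1) + (Ck (-pd0) + Ck (-pd1) * X 1) * X 3
def P5n : R4 := PtP pp pq pr0 ps0 1
def P6n : R4 := PtP pv10 pv11 pv00 pv01 1
def Q2 : R4 := Ck pe + Ck pf * X 0 + Ck pgq * X 0 ^ 2

def e012 : Fin 3 ↪ Fin 4 := ⟨![0, 1, 2], by decide⟩
def e013 : Fin 3 ↪ Fin 4 := ⟨![0, 1, 3], by decide⟩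
def e023 : Fin 3 ↪ Fin 4 := ⟨![0, 2, 3], by decide⟩
def e123 : Fin 3 ↪ Fin 4 := ⟨![1, 2, 3], by decide⟩

lemma hG1 : ((M.submatrix e012 e023).det : R4) = P1n := by
  rw [Matrix.det_fin_three]
  simp only [Matrix.submatrix_apply, e012, e023, Function.Embedding.coeFn_mk,
    Matrix.cons_val_zero, Matrix.cons_val_one, Matrix.head_cons, Matrix.cons_val_two,
    Matrix.tail_cons, M]
  simp
  simp only [P1n, PtP, pf10, pf11, pDc, pa0, pa1, pb0, pb1,
    Ck_mul, Ck_add, Ck_sub, Ck_neg, Ck_x]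
  ring

lemma hG2 : ((M.submatrix e013 e023).det : R4) = P2n := by
  rw [Matrix.det_fin_three]
  simp only [Matrix.submatrix_apply, e013, e023, Function.Embedding.coeFn_mk,
    Matrix.cons_val_zero, Matrix.cons_val_one, Matrix.head_cons, Matrix.cons_val_two,
    Matrix.tail_cons, M]
  simp
  simp only [P2n, PtP, pf20, pf21, pDc, pa0, pa1, pb0, pb1,
    Ck_mul, Ck_add, Ck_sub, Ck_neg, Ck_x]
  ring

lemma hG3 : ((M.submatrix e012 e123).det : R4) = P3n := by
  rw [Matrix.det_fin_three]
  simp only [Matrix.submatrix_apply, e012, e123, Function.Embedding.coeFn_mk,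
    Matrix.cons_val_zero, Matrix.cons_val_one, Matrix.head_cons, Matrix.cons_val_two,
    Matrix.tail_cons, M]
  simp
  simp only [P3n, pg10, pg11, pc0, pc1, pd0, pd1, pDc,
    Ck_mul, Ck_add, Ck_sub, Ck_neg, Ck_x]
  ring

lemma hG4 : ((M.submatrix e013 e123).det : R4) = P4n := by
  rw [Matrix.det_fin_three]
  simp only [Matrix.submatrix_apply, e013, e123, Function.Embedding.coeFn_mk,
    Matrix.cons_val_zero, Matrix.cons_val_one, Matrix.head_cons, Matrix.cons_val_two,
    Matrix.tail_cons, M]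
  simp
  simp only [P4n, pg20, pg21, pc0, pc1, pd0, pd1, pDc,
    Ck_mul, Ck_add, Ck_sub, Ck_neg, Ck_x]
  ring

lemma minor_mem (r s : Fin 3 ↪ Fin 4) : (M.submatrix r s).det ∈ minors3Ideal :=
  Ideal.subset_span ⟨r, s, rfl⟩

lemma P1n_mem : P1n ∈ minors3Ideal := hG1 ▸ minor_mem e012 e023
lemma P2n_mem : P2n ∈ minors3Ideal := hG2 ▸ minor_mem e013 e023
lemma P3n_mem : P3n ∈ minors3Ideal := hG3 ▸ minor_mem e012 e123
lemma P4n_mem : P4n ∈ minors3Ideal := hG4 ▸ minor_mem e013 e123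

lemma P5n_combo :
    (Ck pa0 + Ck pa1 * X 0) * P3n - (Ck pc0 + Ck pc1 * X 1) * P1n = P5n := by
  simp only [P5n, PtP, P3n, P1n, pr0, ps0, pp, pq, pf10, pf11, pg10, pg11,
    Ck_mul, Ck_add, Ck_sub, Ck_neg]
  ring

lemma P6n_combo :
    (Ck pb0 + Ck pb1 * X 0) * P4n - (Ck pd0 + Ck pd1 * X 1) * P2n = P6n := by
  simp only [P6n, PtP, P4n, P2n, pv00, pv01, pv10, pv11, pf20, pf21, pg20, pg21,
    Ck_mul, Ck_add, Ck_sub, Ck_neg]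
  ring

lemma P5n_mem : P5n ∈ minors3Ideal := by
  rw [← P5n_combo]
  exact Ideal.sub_mem _ (Ideal.mul_mem_left _ _ P3n_mem) (Ideal.mul_mem_left _ _ P1n_mem)

lemma P6n_mem : P6n ∈ minors3Ideal := by
  rw [← P6n_combo]
  exact Ideal.sub_mem _ (Ideal.mul_mem_left _ _ P4n_mem) (Ideal.mul_mem_left _ _ P2n_mem)

lemma Q2_combo :
    (Ck pv10 + Ck pv11 * X 0) * P5n - (Ck pp + Ck pq * X 0) * P6n = Q2 := by
  simp only [Q2, P5n, P6n, PtP, pe, pf, pgq, Ck_mul, Ck_add, Ck_sub, Ck_neg]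
  ring

lemma Q2_mem : Q2 ∈ minors3Ideal := by
  rw [← Q2_combo]
  exact Ideal.sub_mem _ (Ideal.mul_mem_left _ _ P5n_mem) (Ideal.mul_mem_left _ _ P6n_mem)

/-- the eliminated linear generator for variable `X i` -/
def Gt (u v r s : PP) (i : Fin 4) : R4 :=
  Ck (pgq * prho u v) * X i + Ck (psig0 u v r s) + Ck (psig1 u v r s) * X 0

lemma Gt_combo (u v r s : PP) (i : Fin 4) :
    Gt u v r s i
      = Ck pgq * (Ck (pgq*u - v*pf) + Ck (-(pgq*v)) * X 0) * PtP u v r s i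
        + (Ck (pgq*(v*v)) * X i + Ck (pgq*(v*s))) * Q2 := by
  simp only [Gt, PtP, Q2, prho, psig0, psig1, Ck_mul, Ck_add, Ck_sub, Ck_neg]
  ring

lemma Gt_mem (u v r s : PP) (i : Fin 4) (h : PtP u v r s i ∈ minors3Ideal) :
    Gt u v r s i ∈ minors3Ideal := by
  rw [Gt_combo]
  exact Ideal.add_mem _ (Ideal.mul_mem_left _ _ h) (Ideal.mul_mem_left _ _ Q2_mem)

def Gy : R4 := Gt pp pq pr0 ps0 1
def Gz : R4 := Gt (-pa0) (-pa1) pf10 pf11 2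
def Gw : R4 := Gt (-pb0) (-pb1) pf20 pf21 3

lemma Gy_mem : Gy ∈ minors3Ideal := Gt_mem _ _ _ _ _ P5n_mem
lemma Gz_mem : Gz ∈ minors3Ideal := Gt_mem _ _ _ _ _ P1n_mem
lemma Gw_mem : Gw ∈ minors3Ideal := Gt_mem _ _ _ _ _ P2n_mem

/-! ### Genericity: the relevant scalars are nonzero -/

def σf : Fin 4 × Fin 4 → ℚ := fun ij =>
  ![![-1, 2, 7, -9], ![5, -2, -8, -4], ![-6, 2, 6, -2], ![3, 8, -6, 9]] ij.1 ij.2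

lemma kk_def (u : PP) : kk u = algebraMap PP genField u := by unfold kk; rfl

lemma kk_ne {u : PP} (h : eval σf u ≠ 0) : kk u ≠ 0 := by
  rw [kk_def]
  intro h0
  exact h (by rw [IsFractionRing.to_map_eq_zero_iff.mp h0, map_zero])

lemma kDc_ne : kk pDc ≠ 0 := by
  apply kk_ne
  simp [pDc, xP, σf]
  norm_num

lemma kg_ne : kk pgq ≠ 0 := by
  apply kk_ne
  simp [pgq, pv11, ps0, pq, pv01, pDc, pa0, pa1, pb0, pb1, pc0, pc1, pd0, pd1, xP, σf]
  norm_num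

lemma kdisc_ne : kk pdisc ≠ 0 := by
  apply kk_ne
  simp [pdisc, pe, pf, pgq, pv00, pv01, pv10, pv11, pp, pq, pr0, ps0,
    pDc, pa0, pa1, pb0, pb1, pc0, pc1, pd0, pd1, xP, σf]
  norm_num

lemma krhoy_ne : kk (prho pp pq) ≠ 0 := by
  apply kk_ne
  simp [prho, pe, pf, pgq, pv00, pv01, pv10, pv11, pp, pq, pr0, ps0,
    pDc, pa0, pa1, pb0, pb1, pc0, pc1, pd0, pd1, xP, σf]
  norm_num

lemma krhoz_ne : kk (prho (-pa0) (-pa1)) ≠ 0 := by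
  apply kk_ne
  simp [prho, pe, pf, pgq, pv00, pv01, pv10, pv11, pp, pq, pr0, ps0,
    pDc, pa0, pa1, pb0, pb1, pc0, pc1, pd0, pd1, xP, σf]
  norm_num

lemma krhow_ne : kk (prho (-pb0) (-pb1)) ≠ 0 := by
  apply kk_ne
  simp [prho, pe, pf, pgq, pv00, pv01, pv10, pv11, pp, pq, pr0, ps0,
    pDc, pa0, pa1, pb0, pb1, pc0, pc1, pd0, pd1, xP, σf]
  norm_num

/-! ### The algebraic closure level -/

@[irreducible] def lk (u : PP) : L := algebraMap genField L (kk u)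

lemma lk_mul (u v : PP) : lk (u*v) = lk u * lk v := by unfold lk kk; rw [map_mul, map_mul]
lemma lk_add (u v : PP) : lk (u+v) = lk u + lk v := by unfold lk kk; rw [map_add, map_add]
lemma lk_sub (u v : PP) : lk (u-v) = lk u - lk v := by unfold lk kk; rw [map_sub, map_sub]
lemma lk_neg (u : PP) : lk (-u) = -lk u := by unfold lk kk; rw [map_neg, map_neg]

lemma lk_def (u : PP) : lk u = algebraMap genField L (kk u) := by unfold lk; rfl

lemma lk_ne {u : PP} (h : kk u ≠ 0) : lk u ≠ 0 := by
  rw [lk_def]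
  intro h0
  exact h ((map_eq_zero_iff _ (algebraMap genField L).injective).mp h0)

lemma lf10_ex : lk pf10 = lk pDc * lk (xP 2 0) - lk pa0 * lk (xP 2 2) - lk pb0 * lk (xP 2 3) := by
  simp only [pf10, lk_mul, lk_sub]
lemma lf11_ex : lk pf11 = -(lk pa1 * lk (xP 2 2)) - lk pb1 * lk (xP 2 3) := by
  simp only [pf11, lk_mul, lk_sub, lk_neg]
lemma lf20_ex : lk pf20 = lk pDc * lk (xP 3 0) - lk pa0 * lk (xP 3 2) - lk pb0 * lk (xP 3 3) := by
  simp only [pf20, lk_mul, lk_sub]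
lemma lf21_ex : lk pf21 = -(lk pa1 * lk (xP 3 2)) - lk pb1 * lk (xP 3 3) := by
  simp only [pf21, lk_mul, lk_sub, lk_neg]
lemma lg10_ex : lk pg10 = lk pDc * lk (xP 2 1) - lk pc0 * lk (xP 2 2) - lk pd0 * lk (xP 2 3) := by
  simp only [pg10, lk_mul, lk_sub]
lemma lg11_ex : lk pg11 = -(lk pc1 * lk (xP 2 2)) - lk pd1 * lk (xP 2 3) := by
  simp only [pg11, lk_mul, lk_sub, lk_neg]
lemma lg20_ex : lk pg20 = lk pDc * lk (xP 3 1) - lk pc0 * lk (xP 3 2) - lk pd0 * lk (xP 3 3) := by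
  simp only [pg20, lk_mul, lk_sub]
lemma lg21_ex : lk pg21 = -(lk pc1 * lk (xP 3 2)) - lk pd1 * lk (xP 3 3) := by
  simp only [pg21, lk_mul, lk_sub, lk_neg]

lemma lDc_ne : lk pDc ≠ 0 := lk_ne kDc_ne
lemma lg_ne : lk pgq ≠ 0 := lk_ne kg_ne
lemma ldisc_ne : lk pdisc ≠ 0 := lk_ne kdisc_ne
lemma lrhoy_ne : lk (prho pp pq) ≠ 0 := lk_ne krhoy_ne
lemma lrhoz_ne : lk (prho (-pa0) (-pa1)) ≠ 0 := lk_ne krhoz_ne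
lemma lrhow_ne : lk (prho (-pb0) (-pb1)) ≠ 0 := lk_ne krhow_ne

/-! ### generic field elimination lemmas -/

lemma lin_ne_zero {F : Type*} [Field F] {p q e f g x0 : F}
    (hQ : e + f*x0 + g*x0^2 = 0) (hrho : g*p*p - f*p*q + e*q*q ≠ 0) : p + q*x0 ≠ 0 := by
  intro h
  apply hrho
  have key : g*p*p - f*p*q + e*q*q
      = q*q*(e + f*x0 + g*x0^2) + (p + q*x0)*(g*p - g*q*x0 - f*q) := by ring
  rw [key, hQ, h]; ring

lemma elim_eval {F : Type*} [Field F] {p q r s e f g ρ σ0 σ1 x0 t : F}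
    (hρ : ρ = g*p*p - f*p*q + e*q*q)
    (hσ0 : σ0 = g*(g*p - q*f)*r + g*q*s*e)
    (hσ1 : σ1 = g*(g*p - q*f)*s - g*g*q*r + g*q*s*f)
    (hQ : e + f*x0 + g*x0^2 = 0)
    (hG : g*ρ*t + (σ0 + σ1*x0) = 0)
    (hg : g ≠ 0) (hρ0 : ρ ≠ 0) :
    (r + s*x0) + (p + q*x0)*t = 0 := by
  have hlam : (g*p - q*f) + (-(g*q))*x0 ≠ 0 := by
    apply lin_ne_zero (p := g*p - q*f) (q := -(g*q)) hQ
    have key : g*(g*p - q*f)*(g*p - q*f) - f*(g*p - q*f)*(-(g*q)) + e*(-(g*q))*(-(g*q))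
        = g*g*ρ := by rw [hρ]; ring
    rw [key]
    exact mul_ne_zero (mul_ne_zero hg hg) hρ0
  have key : g * (((g*p - q*f) + (-(g*q))*x0) * ((r + s*x0) + (p + q*x0)*t)) = 0 := by
    linear_combination hG - (g*q*q*t + g*q*s)*hQ - (g*t)*hρ - hσ0 - x0*hσ1
  rcases mul_eq_zero.mp key with h | h
  · exact absurd h hg
  rcases mul_eq_zero.mp h with h | h
  · exact absurd h hlam
  · exact h

/-! ### the two points -/

/-- coordinate formula -/
@[irreducible] def cf (u v r s : PP) (x0 : L) : L :=
  -(lk (psig0 u v r s) + lk (psig1 u v r s) * x0) / (lk (pgq * prho u v))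

def pt (x0 : L) : Fin 4 → L :=
  ![x0, cf pp pq pr0 ps0 x0, cf (-pa0) (-pa1) pf10 pf11 x0, cf (-pb0) (-pb1) pf20 pf21 x0]

lemma grho_ne (u v : PP) (h : kk (prho u v) ≠ 0) : lk (pgq * prho u v) ≠ 0 := by
  rw [lk_mul]; exact mul_ne_zero lg_ne (lk_ne h)


/-- `Gt` evaluates to zero at the point -/
lemma cf_G (u v r s : PP) (x0 : L) (h : kk (prho u v) ≠ 0) :
    lk pgq * lk (prho u v) * cf u v r s x0 + (lk (psig0 u v r s) + lk (psig1 u v r s) * x0)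
      = 0 := by
  have hne := grho_ne u v h
  unfold cf
  rw [lk_mul] at hne ⊢
  rw [mul_div_cancel₀ _ hne]
  ring

/-- the `P`-value vanishes at the point -/
lemma cf_P (u v r s : PP) (x0 : L)
    (hQ : lk pe + lk pf * x0 + lk pgq * x0^2 = 0) (h : kk (prho u v) ≠ 0) :
    (lk r + lk s * x0) + (lk u + lk v * x0) * cf u v r s x0 = 0 := by
  have h1 : lk (prho u v)
      = lk pgq * lk u * lk u - lk pf * lk u * lk v + lk pe * lk v * lk v := by
    simp only [prho, lk_mul, lk_sub, lk_add]
  have h2 : lk (psig0 u v r s)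
      = lk pgq * (lk pgq * lk u - lk v * lk pf) * lk r + lk pgq * lk v * lk s * lk pe := by
    simp only [psig0, lk_mul, lk_sub, lk_add]
  have h3 : lk (psig1 u v r s)
      = lk pgq * (lk pgq * lk u - lk v * lk pf) * lk s - lk pgq * lk pgq * lk v * lk r
        + lk pgq * lk v * lk s * lk pf := by
    simp only [psig1, lk_mul, lk_sub, lk_add]
  exact elim_eval h1 h2 h3 hQ (cf_G u v r s x0 h) lg_ne (lk_ne h)

/-! ### every minor vanishes at the point -/

def Nm (x0 : L) : Matrix (Fin 4) (Fin 4) L :=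
  fun i j => lk (xP i j) + if i = j then pt x0 i else 0

lemma aeval_M (x0 : L) (i j : Fin 4) : aeval (pt x0) (M i j) = Nm x0 i j := by
  simp only [M, Nm, map_add, aeval_C, apply_ite (aeval (pt x0)), aeval_X, map_zero, lk_def, kk_def]
  rfl

lemma Nm_diag (x0 : L) (i : Fin 4) : Nm x0 i i = lk (xP i i) + pt x0 i := by
  simp [Nm]

lemma Nm_off (x0 : L) {i j : Fin 4} (h : i ≠ j) : Nm x0 i j = lk (xP i j) := by
  simp [Nm, h]

set_option maxHeartbeats 3000000 in
lemma pt_kills (x0 : L) (hQ : lk pe + lk pf * x0 + lk pgq * x0 ^ 2 = 0) :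
    ∀ p ∈ minors3Ideal, aeval (pt x0) p = 0 := by
  -- the four bilinear relations at the point
  have hP5 := cf_P pp pq pr0 ps0 x0 hQ krhoy_ne
  have hP1 := cf_P (-pa0) (-pa1) pf10 pf11 x0 hQ krhoz_ne
  have hP2 := cf_P (-pb0) (-pb1) pf20 pf21 x0 hQ krhow_ne
  rw [lk_neg, lk_neg] at hP1 hP2
  -- name the coordinates
  have hy : pt x0 1 = cf pp pq pr0 ps0 x0 := rfl
  have hz : pt x0 2 = cf (-pa0) (-pa1) pf10 pf11 x0 := rfl
  have hw : pt x0 3 = cf (-pb0) (-pb1) pf20 pf21 x0 := rfl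
  rw [← hy] at hP5
  rw [← hz] at hP1
  rw [← hw] at hP2
  -- u1, Ax, Bx nonvanishing at x0
  have hu1 : lk pp + lk pq * x0 ≠ 0 := by
    apply lin_ne_zero hQ
    have key : lk pgq * lk pp * lk pp - lk pf * lk pp * lk pq + lk pe * lk pq * lk pq
        = lk (prho pp pq) := by simp only [prho, lk_mul, lk_sub, lk_add]
    rw [key]; exact lrhoy_ne
  have hAx : lk pa0 + lk pa1 * x0 ≠ 0 := by
    apply lin_ne_zero hQ
    have key : lk pgq * lk pa0 * lk pa0 - lk pf * lk pa0 * lk pa1 + lk pe * lk pa1 * lk pa1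
        = lk (prho (-pa0) (-pa1)) := by
      simp only [prho, lk_mul, lk_sub, lk_add, lk_neg]; ring
    rw [key]; exact lrhoz_ne
  have hBx : lk pb0 + lk pb1 * x0 ≠ 0 := by
    apply lin_ne_zero hQ
    have key : lk pgq * lk pb0 * lk pb0 - lk pf * lk pb0 * lk pb1 + lk pe * lk pb1 * lk pb1
        = lk (prho (-pb0) (-pb1)) := by
      simp only [prho, lk_mul, lk_sub, lk_add, lk_neg]; ring
    rw [key]; exact lrhow_ne
  -- P6 vanishes
  have hP6 : (lk pv00 + lk pv01 * x0) + (lk pv10 + lk pv11 * x0) * pt x0 1 = 0 := by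
    have hQc : (lk pv10 + lk pv11 * x0)
          * ((lk pr0 + lk ps0 * x0) + (lk pp + lk pq * x0) * pt x0 1)
        - (lk pp + lk pq * x0)
          * ((lk pv00 + lk pv01 * x0) + (lk pv10 + lk pv11 * x0) * pt x0 1)
        = lk pe + lk pf * x0 + lk pgq * x0^2 := by
      simp only [pe, pf, pgq, lk_mul, lk_sub, lk_add]; ring
    rw [hP5, hQ, mul_zero, zero_sub, neg_eq_zero] at hQc
    exact (mul_eq_zero.mp hQc).resolve_left hu1
  -- P3, P4 vanish
  have hP3 : (lk pg10 + lk pg11 * pt x0 1)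
      + (-lk pc0 + -lk pc1 * pt x0 1) * pt x0 2 = 0 := by
    have hcombo : (lk pa0 + lk pa1 * x0)
          * ((lk pg10 + lk pg11 * pt x0 1) + (-lk pc0 + -lk pc1 * pt x0 1) * pt x0 2)
        - (lk pc0 + lk pc1 * pt x0 1)
          * ((lk pf10 + lk pf11 * x0) + (-lk pa0 + -lk pa1 * x0) * pt x0 2)
        = (lk pr0 + lk ps0 * x0) + (lk pp + lk pq * x0) * pt x0 1 := by
      simp only [pr0, ps0, pp, pq, pf10, pf11, pg10, pg11, lk_mul, lk_sub, lk_add, lk_neg]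
      ring
    rw [hP5, hP1, mul_zero, sub_zero] at hcombo
    exact (mul_eq_zero.mp hcombo).resolve_left hAx
  have hP4 : (lk pg20 + lk pg21 * pt x0 1)
      + (-lk pd0 + -lk pd1 * pt x0 1) * pt x0 3 = 0 := by
    have hcombo : (lk pb0 + lk pb1 * x0)
          * ((lk pg20 + lk pg21 * pt x0 1) + (-lk pd0 + -lk pd1 * pt x0 1) * pt x0 3)
        - (lk pd0 + lk pd1 * pt x0 1)
          * ((lk pf20 + lk pf21 * x0) + (-lk pb0 + -lk pb1 * x0) * pt x0 3)
        = (lk pv00 + lk pv01 * x0) + (lk pv10 + lk pv11 * x0) * pt x0 1 := by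
      simp only [pv00, pv01, pv10, pv11, pf20, pf21, pg20, pg21, lk_mul, lk_sub, lk_add, lk_neg]
      ring
    rw [hP6, hP2, mul_zero, sub_zero] at hcombo
    exact (mul_eq_zero.mp hcombo).resolve_left hBx
  have hx : pt x0 0 = x0 := rfl
  -- the column relations
  have hDc := lDc_ne
  have hcol : ∀ i j, Nm x0 i j
      = ![(lk pa0 + lk pa1 * x0)/lk pDc, (lk pc0 + lk pc1 * pt x0 1)/lk pDc, 1, 0] j
          * Nm x0 i 2
        + ![(lk pb0 + lk pb1 * x0)/lk pDc, (lk pd0 + lk pd1 * pt x0 1)/lk pDc, 0, 1] j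
          * Nm x0 i 3 := by
    intro i j
    fin_cases i <;> fin_cases j <;>
      simp only [Fin.zero_eta, Fin.mk_one, Fin.isValue, Nm, Matrix.cons_val_zero,
        Matrix.cons_val_one, Matrix.head_cons, Matrix.cons_val_two, Matrix.tail_cons,
        Matrix.cons_val_three] <;>
      simp <;> (try rw [hx]) <;> field_simp
    · -- (0,0)
      simp only [pDc, pa0, pa1, pb0, pb1, lk_mul, lk_sub, lk_add, lk_neg]; ring
    · -- (0,1)
      simp only [pDc, pc0, pc1, pd0, pd1, lk_mul, lk_sub, lk_add, lk_neg]; ring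
    · -- (1,0)
      simp only [pDc, pa0, pa1, pb0, pb1, lk_mul, lk_sub, lk_add, lk_neg]; ring
    · -- (1,1)
      simp only [pDc, pc0, pc1, pd0, pd1, lk_mul, lk_sub, lk_add, lk_neg]; ring
    · -- (2,0)
      rw [lf10_ex, lf11_ex] at hP1
      linear_combination hP1
    · -- (2,1)
      rw [lg10_ex, lg11_ex] at hP3
      linear_combination hP3
    · -- (3,0)
      rw [lf20_ex, lf21_ex] at hP2
      linear_combination hP2
    · -- (3,1)
      rw [lg20_ex, lg21_ex] at hP4
      linear_combination hP4
  -- finish : every minor vanishes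
  intro P hP
  suffices hle : minors3Ideal ≤ RingHom.ker ((aeval (pt x0) : R4 →ₐ[genField] L) : R4 →+* L) by
    exact hle hP
  rw [minors3Ideal, Ideal.span_le]
  rintro _ ⟨r, s, rfl⟩
  have : ((aeval (pt x0) : R4 →ₐ[genField] L) : R4 →+* L) (M.submatrix r s).det = 0 := by
    rw [RingHom.map_det, Matrix.det_fin_three]
    have hE : ∀ i j, (((aeval (pt x0) : R4 →ₐ[genField] L) : R4 →+* L).mapMatrix
        (M.submatrix r s)) i j = Nm x0 (r i) (s j) := by
      intro i j
      show aeval (pt x0) (M (r i) (s j)) = _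
      exact aeval_M x0 (r i) (s j)
    rw [hE 0 0, hE 0 1, hE 0 2, hE 1 0, hE 1 1, hE 1 2, hE 2 0, hE 2 1, hE 2 2]
    rw [hcol (r 0) (s 0), hcol (r 0) (s 1), hcol (r 0) (s 2),
        hcol (r 1) (s 0), hcol (r 1) (s 1), hcol (r 1) (s 2),
        hcol (r 2) (s 0), hcol (r 2) (s 1), hcol (r 2) (s 2)]
    ring
  simpa [RingHom.mem_ker] using this

/-! ### reduction modulo the ideal -/

lemma kk_mul (u v : PP) : kk (u*v) = kk u * kk v := by unfold kk; rw [map_mul]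

lemma reduce_step (u v r s : PP) (i : Fin 4) (hGt : Gt u v r s i ∈ minors3Ideal)
    (hrho : kk (prho u v) ≠ 0)
    (p : R4) (d α β : genField) (hd : d ≠ 0)
    (hm : C d * p - (C α + C β * X 0) ∈ minors3Ideal) :
    ∃ d' α' β' : genField, d' ≠ 0 ∧
      C d' * (p * X i) - (C α' + C β' * X 0) ∈ minors3Ideal := by
  refine ⟨d * (kk pgq * kk (pgq * prho u v)),
    -(kk pgq * α * kk (psig0 u v r s) - β * kk (psig1 u v r s) * kk pe),
    -(kk pgq * (α * kk (psig1 u v r s) + β * kk (psig0 u v r s))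
      - β * kk (psig1 u v r s) * kk pf),
    mul_ne_zero hd (mul_ne_zero kg_ne (by rw [kk_mul]; exact mul_ne_zero kg_ne hrho)), ?_⟩
  have hmem := Ideal.add_mem _ (Ideal.add_mem _
    (Ideal.mul_mem_left _ (Ck pgq * Ck (pgq * prho u v) * X i) hm)
    (Ideal.mul_mem_left _ (Ck pgq * (C α + C β * X 0)) hGt))
    (Ideal.mul_mem_left _ (C (-(β * kk (psig1 u v r s)))) Q2_mem)
  have heq : Ck pgq * Ck (pgq * prho u v) * X i * (C d * p - (C α + C β * X 0))
      + Ck pgq * (C α + C β * X 0) * Gt u v r s i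
      + C (-(β * kk (psig1 u v r s))) * Q2
      = C (d * (kk pgq * kk (pgq * prho u v))) * (p * X i)
        - (C (-(kk pgq * α * kk (psig0 u v r s) - β * kk (psig1 u v r s) * kk pe))
          + C (-(kk pgq * (α * kk (psig1 u v r s) + β * kk (psig0 u v r s))
              - β * kk (psig1 u v r s) * kk pf)) * X 0) := by
    simp only [Gt, Q2, Ck, C_mul, C_add, C_neg, C_sub]
    ring
  rwa [heq] at hmem

lemma reduce (h : R4) :
    ∃ d α β : genField, d ≠ 0 ∧ C d * h - (C α + C β * X 0) ∈ minors3Ideal := by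
  induction h using MvPolynomial.induction_on with
  | C a =>
    refine ⟨1, a, 0, one_ne_zero, ?_⟩
    have heq : (C (1:genField) * C a - (C a + C 0 * X 0) : R4) = 0 := by simp
    rw [heq]; exact minors3Ideal.zero_mem
  | add p q hp hq =>
    obtain ⟨d1, α1, β1, hd1, h1⟩ := hp
    obtain ⟨d2, α2, β2, hd2, h2⟩ := hq
    refine ⟨d1*d2, d2*α1 + d1*α2, d2*β1 + d1*β2, mul_ne_zero hd1 hd2, ?_⟩
    have hmem := Ideal.add_mem _ (Ideal.mul_mem_left _ (C d2) h1)
      (Ideal.mul_mem_left _ (C d1) h2)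
    have heq : C d2 * (C d1 * p - (C α1 + C β1 * X 0))
        + C d1 * (C d2 * q - (C α2 + C β2 * X 0))
        = C (d1*d2) * (p + q) - (C (d2*α1 + d1*α2) + C (d2*β1 + d1*β2) * X 0) := by
      simp only [C_mul, C_add]; ring
    rwa [heq] at hmem
  | mul_X p i hp =>
    obtain ⟨d, α, β, hd, hm⟩ := hp
    fin_cases i
    · -- X 0 : use Q2
      refine ⟨d * kk pgq, -(β * kk pe), kk pgq * α - β * kk pf, mul_ne_zero hd kg_ne, ?_⟩
      have hmem := Ideal.add_mem _
        (Ideal.mul_mem_left _ (Ck pgq * X 0) hm)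
        (Ideal.mul_mem_left _ (C β) Q2_mem)
      have heq : Ck pgq * X 0 * (C d * p - (C α + C β * X 0)) + C β * Q2
          = C (d * kk pgq) * (p * X 0)
            - (C (-(β * kk pe)) + C (kk pgq * α - β * kk pf) * X 0) := by
        simp only [Q2, Ck, C_mul, C_add, C_neg, C_sub]; ring
      rwa [heq] at hmem
    · exact reduce_step pp pq pr0 ps0 1 Gy_mem krhoy_ne p d α β hd hm
    · exact reduce_step (-pa0) (-pa1) pf10 pf11 2 Gz_mem krhoz_ne p d α β hd hm
    · exact reduce_step (-pb0) (-pb1) pf20 pf21 3 Gw_mem krhow_ne p d α β hd hm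

/-! ### quadratic root facts -/

lemma quad_root {F : Type*} [Field F] (e f g sd : F) (hg : g ≠ 0) (h2 : (2:F) ≠ 0)
    (hsd : sd^2 = f*f - 4*(e*g)) :
    e + f * ((-f + sd)/(2*g)) + g * ((-f + sd)/(2*g))^2 = 0 := by
  have h2g : (2:F)*g ≠ 0 := mul_ne_zero h2 hg
  field_simp
  linear_combination hsd

lemma quad_fac {F : Type*} [Field F] (e f g sd x : F) (hg : g ≠ 0) (h2 : (2:F) ≠ 0)
    (hsd : sd^2 = f*f - 4*(e*g)) :
    g * ((x - (-f + sd)/(2*g)) * (x - (-f + -sd)/(2*g))) = e + f*x + g*x^2 := by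
  have h2g : (2:F)*g ≠ 0 := mul_ne_zero h2 hg
  field_simp
  linear_combination (-1) * hsd

lemma lk_four : lk (4 : PP) = 4 := by unfold lk kk; rw [map_ofNat, map_ofNat]

lemma ldisc_ex : lk pdisc = lk pf * lk pf - 4 * (lk pe * lk pgq) := by
  have : lk pdisc = lk pf * lk pf - lk 4 * (lk pe * lk pgq) := by
    simp only [pdisc, lk_mul, lk_sub]
  rw [this, lk_four]

lemma aeval_Gt (u v r s : PP) (i : Fin 4) (vv : Fin 4 → L) :
    aeval vv (Gt u v r s i)
      = lk (pgq * prho u v) * vv i + lk (psig0 u v r s) + lk (psig1 u v r s) * vv 0 := by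
  simp only [Gt, Ck, map_add, map_mul, aeval_C, aeval_X, lk_def]

lemma aeval_Q2 (vv : Fin 4 → L) :
    aeval vv Q2 = lk pe + lk pf * vv 0 + lk pgq * (vv 0)^2 := by
  simp only [Q2, Ck, map_add, map_mul, map_pow, aeval_C, aeval_X, lk_def]

/-- a common zero of the ideal has coordinates determined by its first coordinate -/
lemma coord_eq (u v r s : PP) (i : Fin 4) (h : kk (prho u v) ≠ 0) (vv : Fin 4 → L)
    (h0 : aeval vv (Gt u v r s i) = 0) : vv i = cf u v r s (vv 0) := by
  rw [aeval_Gt] at h0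
  have hne : lk (pgq * prho u v) ≠ 0 := grho_ne u v h
  unfold cf
  field_simp
  linear_combination h0

lemma v0_root (vv : Fin 4 → L) (h0 : aeval vv Q2 = 0) :
    lk pe + lk pf * vv 0 + lk pgq * (vv 0)^2 = 0 := by
  rw [aeval_Q2] at h0
  exact h0

end MR
end

open MR in
set_option maxHeartbeats 4000000 in
/-- The ideal of `3×3` minors of `C + diag(x,y,z,w)` is radical and its variety
over the algebraic closure of `K` consists of exactly two distinct points. -/
theorem minors3Ideal_radical_two_points :
    minors3Ideal.IsRadical ∧
    ∃ a b : Fin 4 → AlgebraicClosure genField, a ≠ b ∧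
      {x : Fin 4 → AlgebraicClosure genField |
        ∀ p ∈ minors3Ideal, MvPolynomial.aeval x p = 0} = {a, b} := by
  classical
  obtain ⟨sd, hsd⟩ := IsAlgClosed.exists_pow_nat_eq (lk pdisc) (n := 2) (by norm_num)
  rw [ldisc_ex] at hsd
  have h2 : (2 : L) ≠ 0 := two_ne_zero
  have hg := lg_ne
  set xa : L := (-lk pf + sd)/(2*lk pgq) with hxa
  set xb : L := (-lk pf + -sd)/(2*lk pgq) with hxb
  have hsd0 : sd ≠ 0 := by
    intro h0
    apply ldisc_ne
    rw [ldisc_ex, ← hsd, h0]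
    ring
  have hxab : xa ≠ xb := by
    intro h
    apply hsd0
    have h2g : (2:L) * lk pgq ≠ 0 := mul_ne_zero h2 hg
    rw [hxa, hxb, div_eq_div_iff h2g h2g] at h
    have h5 := mul_right_cancel₀ h2g h
    have h6 : (2:L)*sd = 0 := by linear_combination h5
    exact (mul_eq_zero.mp h6).resolve_left h2
  have hrootA : lk pe + lk pf * xa + lk pgq * xa^2 = 0 :=
    quad_root _ _ _ _ hg h2 hsd
  have hrootB : lk pe + lk pf * xb + lk pgq * xb^2 = 0 :=
    quad_root (lk pe) (lk pf) (lk pgq) (-sd) hg h2 (by rw [neg_pow]; simpa using hsd)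
  have killA := pt_kills xa hrootA
  have killB := pt_kills xb hrootB
  have hptab : pt xa ≠ pt xb := by
    intro h
    exact hxab (congrFun h 0)
  constructor
  · -- radicality
    intro x hx
    obtain ⟨n, hn⟩ := Ideal.mem_radical_iff.mp hx
    obtain ⟨d, α, β, hd, hm⟩ := reduce x
    have hxA : MvPolynomial.aeval (pt xa) x = 0 := by
      rcases n with _ | n
      · exfalso
        have h1 := killA _ hn
        simp at h1
      · have h0 := killA _ hn
        rw [map_pow] at h0
        exact pow_eq_zero_iff (Nat.succ_ne_zero n) |>.mp h0
    have hxB : MvPolynomial.aeval (pt xb) x = 0 := by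
      rcases n with _ | n
      · exfalso
        have h1 := killB _ hn
        simp at h1
      · have h0 := killB _ hn
        rw [map_pow] at h0
        exact pow_eq_zero_iff (Nat.succ_ne_zero n) |>.mp h0
    have hmA := killA _ hm
    have hmB := killB _ hm
    rw [map_sub, map_mul, map_add, map_mul] at hmA hmB
    simp only [MvPolynomial.aeval_C, MvPolynomial.aeval_X] at hmA hmB
    rw [hxA, mul_zero, zero_sub, neg_eq_zero,
      show pt xa 0 = xa from rfl] at hmA
    rw [hxB, mul_zero, zero_sub, neg_eq_zero,
      show pt xb 0 = xb from rfl] at hmB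
    have hβL : algebraMap genField L β * (xa - xb) = 0 := by linear_combination hmA - hmB
    have hβ : β = 0 := by
      rcases mul_eq_zero.mp hβL with h | h
      · exact (map_eq_zero_iff _ (algebraMap genField L).injective).mp h
      · exact absurd (sub_eq_zero.mp h) hxab
    have hα : α = 0 := by
      rw [hβ, map_zero, zero_mul, add_zero] at hmA
      exact (map_eq_zero_iff _ (algebraMap genField L).injective).mp hmA
    rw [hα, hβ] at hm
    simp only [MvPolynomial.C_0, zero_mul, add_zero, zero_add, sub_zero] at hm
    have h2m := Ideal.mul_mem_left _ (MvPolynomial.C d⁻¹) hm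
    rwa [← mul_assoc, ← MvPolynomial.C_mul, inv_mul_cancel₀ hd,
      MvPolynomial.C_1, one_mul] at h2m
  · -- the two points
    refine ⟨pt xa, pt xb, hptab, ?_⟩
    ext v
    simp only [Set.mem_setOf_eq, Set.mem_insert_iff, Set.mem_singleton_iff]
    constructor
    · intro hv
      have hQv := v0_root v (hv Q2 Q2_mem)
      have hfac : lk pgq * ((v 0 - xa) * (v 0 - xb)) = 0 := by
        rw [hxa, hxb, quad_fac _ _ _ _ _ hg h2 hsd, hQv]
      have hv0 : v 0 = xa ∨ v 0 = xb := by
        rcases mul_eq_zero.mp hfac with h | h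
        · exact absurd h hg
        rcases mul_eq_zero.mp h with h | h
        · exact Or.inl (sub_eq_zero.mp h)
        · exact Or.inr (sub_eq_zero.mp h)
      have hc1 := coord_eq pp pq pr0 ps0 1 krhoy_ne v (hv Gy Gy_mem)
      have hc2 := coord_eq (-pa0) (-pa1) pf10 pf11 2 krhoz_ne v (hv Gz Gz_mem)
      have hc3 := coord_eq (-pb0) (-pb1) pf20 pf21 3 krhow_ne v (hv Gw Gw_mem)
      rcases hv0 with h0 | h0
      · left
        funext i
        fin_cases i
        · exact h0
        · show v 1 = pt xa 1
          rw [show pt xa 1 = cf pp pq pr0 ps0 xa from rfl, ← h0]; exact hc1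
        · show v 2 = pt xa 2
          rw [show pt xa 2 = cf (-pa0) (-pa1) pf10 pf11 xa from rfl, ← h0]; exact hc2
        · show v 3 = pt xa 3
          rw [show pt xa 3 = cf (-pb0) (-pb1) pf20 pf21 xa from rfl, ← h0]; exact hc3
      · right
        funext i
        fin_cases i
        · exact h0
        · show v 1 = pt xb 1
          rw [show pt xb 1 = cf pp pq pr0 ps0 xb from rfl, ← h0]; exact hc1
        · show v 2 = pt xb 2
          rw [show pt xb 2 = cf (-pa0) (-pa1) pf10 pf11 xb from rfl, ← h0]; exact hc2
        · show v 3 = pt xb 3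
          rw [show pt xb 3 = cf (-pb0) (-pb1) pf20 pf21 xb from rfl, ← h0]; exact hc3
    · intro hv
      rcases hv with h | h <;> subst h
      · exact killA
      · exact killB
end
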